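/- arXiv:1206.1916 — 6 statements merged into one kernel-verified Lean document; each statement's English description precedes it below -/
import Mathlib

section
/- Let x_1,...,x_n ∈ ℝ^d with C_i = cone(x_1,...,x_i). If dim C_i > dim C_{i-1}, then the lexicographic triangulation is invariant under swapping x_{i-1} and x_i: Λ(x_1,...,x_n) = Λ(x_1,...,x_{i-2}, x_i, x_{i-1}, x_{i+1},...,x_n). -/
open Finset

/-- Ambient space `ℝ^d`. -/
abbrev E (d : ℕ) := Fin d → ℝ

/-- The cone generated by a set of vectors:
all finite nonnegative combinations. -/
def coneOf {d : ℕ} (s : Set (E d)) : Set (E d) :=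
  {y | ∃ (t : Finset (E d)) (c : E d → ℝ),
        ↑t ⊆ s ∧ (∀ v, 0 ≤ c v) ∧ y = ∑ v ∈ t, c v • v}

/-- The cone generated by a finite family `x_1, …, x_n`:
`ℝ₊x_1 + ⋯ + ℝ₊x_n`. -/
def coneFin {d n : ℕ} (x : Fin n → E d) : Set (E d) :=
  {y | ∃ c : Fin n → ℝ, (∀ i, 0 ≤ c i) ∧ y = ∑ i, c i • x i}

/-- `σ` is visible from `x` (relative to the cone `D`) if `x ∉ D` and for every
`y ∈ σ` the segment `[x,y]` meets `D` only in `y`. -/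
def VisibleFrom {d : ℕ} (D : Set (E d)) (x : E d) (σ : Set (E d)) : Prop :=
  x ∉ D ∧ ∀ y ∈ σ, ∀ z ∈ segment ℝ x y, z ∈ D → z = y

/-- `cone(σ, x)` for a cone `σ`: all points `y + t•x`, `y ∈ σ`, `t ≥ 0`. -/
def addRay {d : ℕ} (σ : Set (E d)) (x : E d) : Set (E d) :=
  {z | ∃ y ∈ σ, ∃ t : ℝ, 0 ≤ t ∧ z = y + t • x}

/-- The lexicographic (placing) triangulation `Λ(x_1,…,x_n)`, defined
recursively: trivial for the zero cone, and at each step the cones over the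
members of the previous triangulation visible from the new generator are
added. -/
def lexTri {d : ℕ} : (n : ℕ) → (Fin n → E d) → Set (Set (E d))
  | 0, _ => {{0}}
  | n + 1, x =>
      lexTri n (fun i => x i.castSucc) ∪
      {τ | ∃ σ ∈ lexTri n (fun i => x i.castSucc),
            VisibleFrom (coneFin (fun i => x i.castSucc)) (x (Fin.last n)) σ ∧
            τ = addRay σ (x (Fin.last n))}

/-- The dimension of a subset of `ℝ^d`: the dimension of its linear span. -/
noncomputable def setDim {d : ℕ} (s : Set (E d)) : ℕ :=
  Module.finrank ℝ (Submodule.span ℝ s)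

/-- Restriction `Σ|C' = {σ ∩ C' : σ ∈ Σ, dim (σ ∩ C') = dim C'}`. -/
noncomputable def restrictTri {d : ℕ} (T : Set (Set (E d))) (s : Set (E d)) :
    Set (Set (E d)) :=
  {τ | ∃ σ ∈ T, τ = σ ∩ s ∧ setDim (σ ∩ s) = setDim s}

/-- `F` is a face of the cone `C`: either `C` itself or the intersection of
`C` with a supporting hyperplane. -/
def IsFace {d : ℕ} (C F : Set (E d)) : Prop :=
  F = C ∨ ∃ μ : (E d) →ₗ[ℝ] ℝ, (∀ y ∈ C, 0 ≤ μ y) ∧ F = C ∩ {y | μ y = 0}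

/-- A cone is pointed if it contains no nonzero linear subspace. -/
def IsPointedCone {d : ℕ} (C : Set (E d)) : Prop :=
  ∀ y, y ∈ C → -y ∈ C → y = 0

/-- `T` is a triangulation of `C` with rays through a subset of `gens`:
every member is a simplicial cone spanned by a linearly independent subset of
`gens`, the members cover `C`, and any two members intersect in a common
face. -/
def IsTriangulationOn {d : ℕ} (gens : Set (E d)) (C : Set (E d))
    (T : Set (Set (E d))) : Prop :=
  (∀ σ ∈ T, ∃ s : Finset (E d), ↑s ⊆ gens ∧
      LinearIndependent ℝ (fun v : s => (v : E d)) ∧ σ = coneOf (↑s : Set (E d))) ∧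
  ⋃₀ T = C ∧
  (∀ σ ∈ T, ∀ τ ∈ T, IsFace σ (σ ∩ τ) ∧ IsFace τ (σ ∩ τ))

-- helper lemmas
section helpers
variable {d : ℕ}

lemma subset_addRay (σ : Set (E d)) (v : E d) : σ ⊆ addRay σ v := by
  intro y hy; exact ⟨y, hy, 0, le_refl 0, by simp⟩

lemma addRay_mono {σ τ : Set (E d)} (h : σ ⊆ τ) (v : E d) : addRay σ v ⊆ addRay τ v := by
  rintro z ⟨y, hy, t, ht, rfl⟩; exact ⟨y, h hy, t, ht, rfl⟩

lemma addRay_comm (σ : Set (E d)) (a b : E d) :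
    addRay (addRay σ a) b = addRay (addRay σ b) a := by
  ext z
  constructor
  · rintro ⟨w, ⟨y, hy, s, hs, rfl⟩, t, ht, rfl⟩
    exact ⟨y + t • b, ⟨y, hy, t, ht, rfl⟩, s, hs, by module⟩
  · rintro ⟨w, ⟨y, hy, s, hs, rfl⟩, t, ht, rfl⟩
    exact ⟨y + t • a, ⟨y, hy, t, ht, rfl⟩, s, hs, by module⟩

lemma addRay_subset_submodule {σ : Set (E d)} {v : E d} {W : Submodule ℝ (E d)}
    (hσ : σ ⊆ (W : Set (E d))) (hv : v ∈ W) : addRay σ v ⊆ (W : Set (E d)) := by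
  rintro z ⟨y, hy, t, ht, rfl⟩; exact W.add_mem (hσ hy) (W.smul_mem t hv)

lemma coneFin_succ {n : ℕ} (x : Fin (n+1) → E d) :
    coneFin x = addRay (coneFin fun i => x i.castSucc) (x (Fin.last n)) := by
  ext z
  constructor
  · rintro ⟨c, hc, rfl⟩
    refine ⟨∑ i : Fin n, c i.castSucc • x i.castSucc,
      ⟨fun i => c i.castSucc, fun i => hc _, rfl⟩, c (Fin.last n), hc _, ?_⟩
    rw [Fin.sum_univ_castSucc]
  · rintro ⟨y, ⟨c, hc, rfl⟩, t, ht, rfl⟩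
    refine ⟨Fin.snoc c t, ?_, ?_⟩
    · intro i
      refine Fin.lastCases ?_ ?_ i
      · simpa using ht
      · intro j; simpa using hc j
    · rw [Fin.sum_univ_castSucc]; simp

lemma coneFin_subset_submodule {n : ℕ} {x : Fin n → E d} {W : Submodule ℝ (E d)}
    (h : ∀ i, x i ∈ W) : coneFin x ⊆ (W : Set (E d)) := by
  rintro z ⟨c, hc, rfl⟩
  exact Submodule.sum_mem _ fun i _ => W.smul_mem _ (h i)

lemma coneFin_comp_perm {n : ℕ} (x : Fin n → E d) (e : Equiv.Perm (Fin n)) :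
    coneFin (x ∘ e) = coneFin x := by
  ext z
  constructor
  · rintro ⟨c, hc, rfl⟩
    refine ⟨c ∘ e.symm, fun i => hc _, ?_⟩
    have h := Equiv.sum_comp e (fun j => c (e.symm j) • x j)
    simp only [Function.comp]
    rw [← h]
    simp
  · rintro ⟨c, hc, rfl⟩
    refine ⟨c ∘ e.symm.symm, fun i => hc _, ?_⟩
    have h := Equiv.sum_comp e (fun j => c j • x j)
    simp only [Function.comp]
    rw [← h]
    simp

def lexStep (A : Set (Set (E d))) (D : Set (E d)) (v : E d) : Set (Set (E d)) :=
  A ∪ {τ | ∃ σ ∈ A, VisibleFrom D v σ ∧ τ = addRay σ v}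

lemma lexTri_succ {n : ℕ} (x : Fin (n+1) → E d) :
    lexTri (n+1) x = lexStep (lexTri n fun i => x i.castSucc)
      (coneFin fun i => x i.castSucc) (x (Fin.last n)) := rfl

lemma lexTri_subset {n : ℕ} {x : Fin n → E d} :
    ∀ σ ∈ lexTri n x, σ ⊆ coneFin x := by
  induction n with
  | zero =>
    intro σ hσ
    simp only [lexTri, Set.mem_singleton_iff] at hσ
    subst hσ
    rintro y rfl
    exact ⟨fun _ => 0, fun i => le_refl 0, by simp⟩
  | succ n IH =>
    intro σ hσ
    rw [coneFin_succ]
    rcases hσ with h | ⟨σ₀, hσ₀, -, rfl⟩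
    · exact (IH σ h).trans (subset_addRay _ _)
    · exact addRay_mono (IH σ₀ hσ₀) _

end helpers

section vis
variable {d : ℕ}

lemma smul_coef_eq_zero {W : Submodule ℝ (E d)} {b : E d} (hb : b ∉ W) {t : ℝ}
    (h : t • b ∈ W) : t = 0 := by
  by_contra ht
  exact hb (by simpa [smul_smul, inv_mul_cancel₀ ht] using W.smul_mem t⁻¹ h)

lemma visibleFrom_of_notMem {D σ : Set (E d)} {b : E d} {W : Submodule ℝ (E d)}
    (hD : D ⊆ (W : Set (E d))) (hσ : σ ⊆ (W : Set (E d))) (hb : b ∉ W) :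
    VisibleFrom D b σ := by
  refine ⟨fun h => hb (hD h), ?_⟩
  rintro y hy z ⟨s, t, hs, ht, hst, rfl⟩ hzD
  have h3 : s • b ∈ W := by
    have h1 : s • b + t • y ∈ W := hD hzD
    have h2 : t • y ∈ W := W.smul_mem t (hσ hy)
    simpa using W.sub_mem h1 h2
  have hs0 : s = 0 := smul_coef_eq_zero hb h3
  have ht1 : t = 1 := by linarith
  simp [hs0, ht1]

lemma notMem_addRay {D : Set (E d)} {a b : E d} {W : Submodule ℝ (E d)}
    (hD : D ⊆ (W : Set (E d))) (ha : a ∈ W) (hb : b ∉ W) (haD : a ∉ D) :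
    a ∉ addRay D b := by
  rintro ⟨y, hy, t, ht, heq⟩
  have htb : t • b ∈ W := by
    have he : t • b = a - y := by rw [heq]; module
    rw [he]; exact W.sub_mem ha (hD hy)
  have ht0 : t = 0 := smul_coef_eq_zero hb htb
  rw [ht0, zero_smul, add_zero] at heq
  exact haD (heq ▸ hy)

lemma vis_iff₁ {D σ : Set (E d)} {a b : E d} {W : Submodule ℝ (E d)}
    (hD : D ⊆ (W : Set (E d))) (hσ : σ ⊆ D) (ha : a ∈ W) (hb : b ∉ W) (haD : a ∉ D) :
    VisibleFrom (addRay D b) a σ ↔ VisibleFrom D a σ := by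
  constructor
  · rintro ⟨-, hvis⟩
    exact ⟨haD, fun y hy z hz hzD => hvis y hy z hz (subset_addRay D b hzD)⟩
  · rintro ⟨-, hvis⟩
    refine ⟨notMem_addRay hD ha hb haD, ?_⟩
    rintro y hy z ⟨s, t, hs, ht, hst, rfl⟩ ⟨w, hw, u, hu, heq⟩
    have hmem : u • b ∈ W := by
      have he : u • b = s • a + t • y - w := by rw [heq]; module
      rw [he]
      exact W.sub_mem (W.add_mem (W.smul_mem s ha) (W.smul_mem t (hD (hσ hy)))) (hD hw)
    have hu0 : u = 0 := smul_coef_eq_zero hb hmem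
    have hzD : s • a + t • y ∈ D := by
      rw [heq, hu0, zero_smul, add_zero]; exact hw
    exact hvis y hy _ ⟨s, t, hs, ht, hst, rfl⟩ hzD

lemma vis_iff₂ {D σ : Set (E d)} {a b : E d} {W : Submodule ℝ (E d)}
    (hD : D ⊆ (W : Set (E d))) (hσ : σ ⊆ D) (ha : a ∈ W) (hb : b ∉ W) (haD : a ∉ D) :
    VisibleFrom (addRay D b) a (addRay σ b) ↔ VisibleFrom D a σ := by
  constructor
  · rintro ⟨-, hvis⟩
    refine ⟨haD, ?_⟩
    rintro y hy z hz hzD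
    exact hvis y (subset_addRay σ b hy) z hz (subset_addRay D b hzD)
  · rintro ⟨-, hvis⟩
    refine ⟨notMem_addRay hD ha hb haD, ?_⟩
    rintro y ⟨y₀, hy₀, t, ht, rfl⟩ z ⟨s₁, s₂, hs₁, hs₂, hs, rfl⟩ ⟨w₀, hw₀, u, hu, heq⟩
    -- heq : s₁ • a + s₂ • (y₀ + t • b) = w₀ + u • b
    have hmem : (u - s₂ * t) • b ∈ W := by
      have he : (u - s₂ * t) • b = s₁ • a + s₂ • y₀ - w₀ := by
        linear_combination (norm := module) - heq
      rw [he]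
      exact W.sub_mem (W.add_mem (W.smul_mem s₁ ha) (W.smul_mem s₂ (hD (hσ hy₀)))) (hD hw₀)
    have hu0 : u - s₂ * t = 0 := smul_coef_eq_zero hb hmem
    have hw0D : s₁ • a + s₂ • y₀ ∈ D := by
      have hut : u = s₂ * t := by linarith
      rw [hut] at heq
      have he : s₁ • a + s₂ • y₀ = w₀ := by
        linear_combination (norm := module) heq
      rw [he]; exact hw₀
    have hseg : s₁ • a + s₂ • y₀ = y₀ :=
      hvis y₀ hy₀ _ ⟨s₁, s₂, hs₁, hs₂, hs, rfl⟩ hw0D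
    have hs₁0 : s₁ = 0 := by
      by_contra h
      have hsmul : s₁ • a = s₁ • y₀ := by
        have h12 : (1 : ℝ) - s₂ = s₁ := by linarith
        have : s₁ • a = ((1:ℝ) - s₂) • y₀ := by
          linear_combination (norm := module) hseg
        rwa [h12] at this
      exact haD ((smul_right_injective (E d) h hsmul) ▸ hσ hy₀)
    have hs₂1 : s₂ = 1 := by linarith
    simp [hs₁0, hs₂1]

end vis

section step
variable {d : ℕ}

lemma lexStep_of_mem {A : Set (Set (E d))} {D : Set (E d)} {v : E d} (h : v ∈ D) :
    lexStep A D v = A := by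
  apply Set.union_eq_self_of_subset_right
  rintro τ ⟨σ, hσ, ⟨hv, -⟩, rfl⟩
  exact absurd h hv

lemma lexStep_eq_of_visible {A : Set (Set (E d))} {D : Set (E d)} {v : E d}
    (h : ∀ σ ∈ A, VisibleFrom D v σ) :
    lexStep A D v = A ∪ (fun σ => addRay σ v) '' A := by
  unfold lexStep
  congr 1
  ext τ
  simp only [Set.mem_image, Set.mem_setOf_eq]
  constructor
  · rintro ⟨σ, hσ, -, rfl⟩; exact ⟨σ, hσ, rfl⟩
  · rintro ⟨σ, hσ, rfl⟩; exact ⟨σ, hσ, h σ hσ, rfl⟩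

lemma lexStep_swap {A : Set (Set (E d))} {D : Set (E d)} {a b : E d} {W : Submodule ℝ (E d)}
    (hD : D ⊆ (W : Set (E d))) (ha : a ∈ W) (hb : b ∉ W) (hA : ∀ σ ∈ A, σ ⊆ D) :
    lexStep (lexStep A D a) (addRay D a) b = lexStep (lexStep A D b) (addRay D b) a := by
  have hDaW : addRay D a ⊆ (W : Set (E d)) := addRay_subset_submodule hD ha
  have hA₁ : ∀ σ ∈ lexStep A D a, σ ⊆ addRay D a := by
    rintro σ (hσ | ⟨σ₀, hσ₀, -, rfl⟩)
    · exact (hA σ hσ).trans (subset_addRay D a)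
    · exact addRay_mono (hA σ₀ hσ₀) a
  have hL : lexStep (lexStep A D a) (addRay D a) b
      = lexStep A D a ∪ (fun σ => addRay σ b) '' lexStep A D a :=
    lexStep_eq_of_visible fun σ hσ => visibleFrom_of_notMem hDaW ((hA₁ σ hσ).trans hDaW) hb
  have hR1 : lexStep A D b = A ∪ (fun σ => addRay σ b) '' A :=
    lexStep_eq_of_visible fun σ hσ => visibleFrom_of_notMem hD ((hA σ hσ).trans hD) hb
  by_cases haD : a ∈ D
  · have h1 : lexStep A D a = A := lexStep_of_mem haD
    have h2 : lexStep (lexStep A D b) (addRay D b) a = lexStep A D b :=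
      lexStep_of_mem (subset_addRay D b haD)
    rw [hL, h1, h2, hR1]
  · have hS' : {τ | ∃ σ ∈ lexStep A D b, VisibleFrom (addRay D b) a σ ∧ τ = addRay σ a}
        = {τ | ∃ σ ∈ A, VisibleFrom D a σ ∧ τ = addRay σ a} ∪
          (fun σ => addRay σ b) '' {τ | ∃ σ ∈ A, VisibleFrom D a σ ∧ τ = addRay σ a} := by
      rw [hR1]
      ext τ
      simp only [Set.mem_setOf_eq, Set.mem_union, Set.mem_image]
      constructor
      · rintro ⟨σ, hσ | ⟨σ₀, hσ₀, rfl⟩, hvis, rfl⟩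
        · exact Or.inl ⟨σ, hσ, (vis_iff₁ hD (hA σ hσ) ha hb haD).mp hvis, rfl⟩
        · exact Or.inr ⟨addRay σ₀ a,
            ⟨σ₀, hσ₀, (vis_iff₂ hD (hA σ₀ hσ₀) ha hb haD).mp hvis, rfl⟩,
            (addRay_comm σ₀ a b)⟩
      · rintro (⟨σ, hσ, hvis, rfl⟩ | ⟨τ₀, ⟨σ, hσ, hvis, rfl⟩, rfl⟩)
        · exact ⟨σ, Or.inl hσ, (vis_iff₁ hD (hA σ hσ) ha hb haD).mpr hvis, rfl⟩
        · exact ⟨addRay σ b, Or.inr ⟨σ, hσ, rfl⟩,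
            (vis_iff₂ hD (hA σ hσ) ha hb haD).mpr hvis, addRay_comm σ a b⟩
    have hR : lexStep (lexStep A D b) (addRay D b) a
        = lexStep A D b ∪
          ({τ | ∃ σ ∈ A, VisibleFrom D a σ ∧ τ = addRay σ a} ∪
            (fun σ => addRay σ b) '' {τ | ∃ σ ∈ A, VisibleFrom D a σ ∧ τ = addRay σ a}) := by
      rw [← hS']; rfl
    have hstep_a : lexStep A D a = A ∪ {τ | ∃ σ ∈ A, VisibleFrom D a σ ∧ τ = addRay σ a} := rfl
    rw [hL, hR, hR1, hstep_a, Set.image_union]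
    ext τ
    simp only [Set.mem_union]
    tauto

end step

section dim
variable {d : ℕ}

lemma subset_coneOf (s : Set (E d)) : s ⊆ coneOf s := by
  intro y hy
  exact ⟨{y}, fun _ => 1, by simpa using hy, fun _ => zero_le_one, by simp⟩

lemma coneOf_subset_span (s : Set (E d)) :
    coneOf s ⊆ (Submodule.span ℝ s : Set (E d)) := by
  rintro y ⟨t, c, hts, hc, rfl⟩
  exact Submodule.sum_mem _ fun v hv =>
    Submodule.smul_mem _ _ (Submodule.subset_span (hts hv))

lemma span_coneOf (s : Set (E d)) :
    Submodule.span ℝ (coneOf s) = Submodule.span ℝ s :=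
  le_antisymm (Submodule.span_le.mpr (coneOf_subset_span s))
    (Submodule.span_mono (subset_coneOf s))

lemma notMem_span_of_dim_lt {n : ℕ} (x : Fin n → E d) (p q : Fin n)
    (hpq : (p : ℕ) + 1 = (q : ℕ))
    (hdim : setDim (coneOf (x '' {k | k ≤ p})) < setDim (coneOf (x '' {k | k ≤ q}))) :
    x q ∉ Submodule.span ℝ (x '' {k | k ≤ p}) := by
  intro hmem
  refine absurd hdim (not_lt.mpr ?_)
  unfold setDim
  rw [span_coneOf, span_coneOf]
  apply Submodule.finrank_mono
  rw [Submodule.span_le]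
  rintro y ⟨k, hk, rfl⟩
  by_cases hkp : k ≤ p
  · exact Submodule.subset_span ⟨k, hkp, rfl⟩
  · have hkq : k = q := by
      have h1 : (k : ℕ) ≤ (q : ℕ) := hk
      have h2 : ¬ (k : ℕ) ≤ (p : ℕ) := fun h => hkp h
      exact Fin.ext (by omega)
    subst hkq
    exact hmem

lemma image_castSucc {n : ℕ} (x : Fin (n+1) → E d) (r : Fin n) :
    (fun i => x i.castSucc) '' {k | k ≤ r} = x '' {k | k ≤ r.castSucc} := by
  ext y
  constructor
  · rintro ⟨k, hk, rfl⟩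
    exact ⟨k.castSucc, Fin.castSucc_le_castSucc_iff.mpr hk, rfl⟩
  · rintro ⟨k, hk, rfl⟩
    have hkv : (k : ℕ) ≤ (r : ℕ) := hk
    refine ⟨⟨k, lt_of_le_of_lt hkv r.isLt⟩, hkv, ?_⟩
    congr 1

end dim



/-- Let `x_1,…,x_n ∈ ℝ^d` with `C_i = cone(x_1,…,x_i)`.
If `dim C_i > dim C_{i-1}`, then the lexicographic triangulation is invariant
under swapping `x_{i-1}` and `x_i`. (Here `p, q` are the 0-indexed positions
of `x_{i-1}` and `x_i`, so `q = p + 1`, `C_{i-1} = cone(x_k : k ≤ p)` and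
`C_i = cone(x_k : k ≤ q)`.) -/
theorem lexTri_swap {d n : ℕ} (x : Fin n → E d) (p q : Fin n)
    (hpq : (p : ℕ) + 1 = (q : ℕ))
    (hdim : setDim (coneOf (x '' {k | k ≤ p})) <
            setDim (coneOf (x '' {k | k ≤ q}))) :
    lexTri n x = lexTri n (x ∘ Equiv.swap p q) := by
  induction n with
  | zero => exact q.elim0
  | succ n IH =>
    by_cases hq : (q : ℕ) < n
    · -- both p and q lie in the prefix: use the induction hypothesis
      have hp : (p : ℕ) < n := by omega
      set p' : Fin n := ⟨p, hp⟩ with hp'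
      set q' : Fin n := ⟨q, hq⟩ with hq'
      have hpc : p'.castSucc = p := Fin.ext rfl
      have hqc : q'.castSucc = q := Fin.ext rfl
      have hxe : (fun i : Fin n => (x ∘ Equiv.swap p q) i.castSucc)
          = (fun i : Fin n => x i.castSucc) ∘ (Equiv.swap p' q') := by
        funext i
        simp only [Function.comp_apply]
        rw [← hpc, ← hqc, (Fin.castSucc_injective n).swap_apply]
      have hlast : (x ∘ Equiv.swap p q) (Fin.last n) = x (Fin.last n) := by
        simp only [Function.comp_apply]
        rw [Equiv.swap_apply_of_ne_of_ne]
        · exact Fin.ne_of_val_ne (by simp; omega)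
        · exact Fin.ne_of_val_ne (by simp; omega)
      have hIH : lexTri n (fun i : Fin n => x i.castSucc)
          = lexTri n ((fun i : Fin n => x i.castSucc) ∘ Equiv.swap p' q') := by
        apply IH
        · exact hpq
        · rw [image_castSucc x p', image_castSucc x q', hpc, hqc]; exact hdim
      rw [lexTri_succ, lexTri_succ, hxe, hlast, coneFin_comp_perm, ← hIH]
    · -- q is the last index: the core two-step swap
      have hqn : (q : ℕ) = n := by omega
      obtain ⟨m, rfl⟩ : ∃ m, n = m + 1 := ⟨n - 1, by omega⟩
      have hpv : (p : ℕ) = m := by omega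
      have hb : x q ∉ Submodule.span ℝ (x '' {k | k ≤ p}) :=
        notMem_span_of_dim_lt x p q hpq hdim
      have hDW : coneFin (fun i : Fin m => x i.castSucc.castSucc) ⊆
          (Submodule.span ℝ (x '' {k | k ≤ p}) : Set (E d)) := by
        apply coneFin_subset_submodule
        intro i
        refine Submodule.subset_span ⟨i.castSucc.castSucc, ?_, rfl⟩
        show (i.castSucc.castSucc : ℕ) ≤ (p : ℕ)
        simp
        omega
      have hpa : x p ∈ Submodule.span ℝ (x '' {k | k ≤ p}) :=
        Submodule.subset_span ⟨p, le_refl p, rfl⟩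
      have hAD := lexTri_subset (x := fun i : Fin m => x i.castSucc.castSucc)
      have hplast : (Fin.last m).castSucc = p := by
        apply Fin.ext
        simp only [Fin.coe_castSucc, Fin.val_last]
        omega
      have hqlast : Fin.last (m+1) = q := by
        apply Fin.ext
        simp only [Fin.val_last]
        omega
      have e4 : x ((Fin.last m).castSucc) = x p := congrArg x hplast
      have e5 : x (Fin.last (m+1)) = x q := congrArg x hqlast
      have e1 : (x ∘ Equiv.swap p q) (Fin.last (m+1)) = x p := by
        simp only [Function.comp_apply]
        rw [hqlast, Equiv.swap_apply_right]
      have e3 : (x ∘ Equiv.swap p q) ((Fin.last m).castSucc) = x q := by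
        simp only [Function.comp_apply]
        rw [hplast, Equiv.swap_apply_left]
      have e2 : (fun i : Fin m => (x ∘ Equiv.swap p q) i.castSucc.castSucc)
          = fun i : Fin m => x i.castSucc.castSucc := by
        funext i
        simp only [Function.comp_apply]
        exact congrArg x (Equiv.swap_apply_of_ne_of_ne
          (Fin.ne_of_val_ne (by simp only [Fin.coe_castSucc]; omega))
          (Fin.ne_of_val_ne (by simp only [Fin.coe_castSucc]; omega)))
      simp only [lexTri_succ, coneFin_succ]
      rw [e1, e2, e3, e4, e5]
      exact lexStep_swap hDW hpa hb hAD
end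

section
/- Let x_1,...,x_n ∈ ℝ^d span a cone of dimension d. Let (i_1,...,i_d) be the lexicographically smallest index vector of a rank-d subset of {x_1,...,x_n} and let j_1 < ... < j_{n-d} be the complementary indices. Then Λ(x_1,...,x_n) = Λ(x_{i_1},...,x_{i_d}, x_{j_1},...,x_{j_{n-d}}). -/
open Finset

namespace LexFront

variable {d : ℕ}

/-- new cones added when placing `a` with current cone `D` and triangulation `T`. -/
def newCones (D : Set (E d)) (a : E d) (T : Set (Set (E d))) : Set (Set (E d)) :=
  {τ | ∃ σ ∈ T, VisibleFrom D a σ ∧ τ = addRay σ a}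

/-- cone of a list of generators. -/
def coneL : List (E d) → Set (E d)
  | [] => {0}
  | a :: l => addRay (coneL l) a

/-- list version of lexTri; the HEAD of the list is the *last placed* generator. -/
def lexTriL : List (E d) → Set (Set (E d))
  | [] => {{0}}
  | a :: l => lexTriL l ∪ newCones (coneL l) a (lexTriL l)

def spanM (l : List (E d)) : Submodule ℝ (E d) := Submodule.span ℝ {a | a ∈ l}

lemma addRay_comm (σ : Set (E d)) (a b : E d) :
    addRay (addRay σ a) b = addRay (addRay σ b) a := by
  ext z
  constructor
  · rintro ⟨y, ⟨w, hw, t, ht, rfl⟩, r, hr, rfl⟩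
    exact ⟨w + r • b, ⟨w, hw, r, hr, rfl⟩, t, ht, by abel⟩
  · rintro ⟨y, ⟨w, hw, t, ht, rfl⟩, r, hr, rfl⟩
    exact ⟨w + r • a, ⟨w, hw, r, hr, rfl⟩, t, ht, by abel⟩

lemma mem_addRay_self {σ : Set (E d)} {y : E d} (hy : y ∈ σ) (a : E d) :
    y ∈ addRay σ a := ⟨y, hy, 0, le_refl _, by simp⟩

lemma subset_addRay (σ : Set (E d)) (a : E d) : σ ⊆ addRay σ a :=
  fun _ hy => mem_addRay_self hy a

lemma addRay_mono {σ τ : Set (E d)} (h : σ ⊆ τ) (a : E d) :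
    addRay σ a ⊆ addRay τ a := by
  rintro z ⟨y, hy, t, ht, rfl⟩; exact ⟨y, h hy, t, ht, rfl⟩

lemma coneL_perm : ∀ {l₁ l₂ : List (E d)}, l₁.Perm l₂ → coneL l₁ = coneL l₂ := by
  intro l₁ l₂ h
  induction h with
  | nil => rfl
  | cons a _ ih => simp [coneL, ih]
  | swap a b l => exact addRay_comm _ _ _
  | trans _ _ ih₁ ih₂ => rw [ih₁, ih₂]

lemma zero_mem_coneL (l : List (E d)) : (0 : E d) ∈ coneL l := by
  induction l with
  | nil => rfl
  | cons a l ih => exact ⟨0, ih, 0, le_refl _, by simp⟩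

lemma coneL_add {l : List (E d)} : ∀ {y z : E d}, y ∈ coneL l → z ∈ coneL l →
    y + z ∈ coneL l := by
  induction l with
  | nil => rintro y z rfl rfl; simp; rfl
  | cons a l ih =>
    rintro y z ⟨y', hy', t, ht, rfl⟩ ⟨z', hz', r, hr, rfl⟩
    exact ⟨y' + z', ih hy' hz', t + r, by positivity, by rw [add_smul]; abel⟩

lemma coneL_smul {l : List (E d)} {c : ℝ} (hc : 0 ≤ c) : ∀ {y : E d}, y ∈ coneL l →
    c • y ∈ coneL l := by
  induction l with
  | nil => rintro y rfl; simp; rfl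
  | cons a l ih =>
    rintro y ⟨y', hy', t, ht, rfl⟩
    exact ⟨c • y', ih hy', c * t, by positivity, by rw [smul_add, smul_smul]⟩

lemma coneL_cons_of_mem {l : List (E d)} {v : E d} (hv : v ∈ coneL l) :
    coneL (v :: l) = coneL l := by
  apply Set.Subset.antisymm
  · rintro z ⟨y, hy, t, ht, rfl⟩
    exact coneL_add hy (coneL_smul ht hv)
  · exact subset_addRay _ _

lemma spanM_cons (a : E d) (l : List (E d)) :
    spanM (a :: l) = Submodule.span ℝ (insert a {b | b ∈ l}) := by
  unfold spanM; congr 1; ext b; simp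

lemma spanM_cons_of_mem {l : List (E d)} {v : E d} (hv : v ∈ spanM l) :
    spanM (v :: l) = spanM l := by
  rw [spanM_cons, Submodule.span_insert_eq_span hv]; rfl

lemma mem_spanM_of_mem {l : List (E d)} {a : E d} (h : a ∈ l) : a ∈ spanM l :=
  Submodule.subset_span h

lemma spanM_mono_cons (a : E d) (l : List (E d)) : spanM l ≤ spanM (a :: l) := by
  apply Submodule.span_mono; intro b hb; simp at hb ⊢; exact Or.inr hb

lemma coneL_subset_spanM (l : List (E d)) : coneL l ⊆ (spanM l : Set (E d)) := by
  induction l with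
  | nil => rintro y rfl; exact Submodule.zero_mem _
  | cons a l ih =>
    rintro z ⟨y, hy, t, ht, rfl⟩
    exact Submodule.add_mem _ (spanM_mono_cons a l (ih hy))
      (Submodule.smul_mem _ _ (mem_spanM_of_mem (by simp)))

lemma mem_lexTriL_subset_coneL {l : List (E d)} {σ : Set (E d)}
    (h : σ ∈ lexTriL l) : σ ⊆ coneL l := by
  induction l generalizing σ with
  | nil => simp only [lexTriL, Set.mem_singleton_iff] at h; subst h; exact le_refl _
  | cons a l ih =>
    rcases h with h | ⟨σ', hσ', _, rfl⟩
    · exact (ih h).trans (subset_addRay _ _)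
    · exact addRay_mono (ih hσ') a

lemma mem_lexTriL_subset_spanM {l : List (E d)} {σ : Set (E d)}
    (h : σ ∈ lexTriL l) : σ ⊆ (spanM l : Set (E d)) :=
  (mem_lexTriL_subset_coneL h).trans (coneL_subset_spanM l)

end LexFront

namespace LexFront

variable {d : ℕ}

lemma coneFin_eq_coneL {n : ℕ} (x : Fin n → E d) :
    coneFin x = coneL (List.ofFn x) := by
  induction n with
  | zero =>
    ext y
    simp only [coneFin, Set.mem_setOf_eq, List.ofFn_zero, coneL,
      Set.mem_singleton_iff]
    constructor
    · rintro ⟨c, -, rfl⟩; simp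
    · rintro rfl; exact ⟨fun i => 0, fun i => le_refl _, by simp⟩
  | succ n ih =>
    rw [List.ofFn_succ]
    show coneFin x = addRay (coneL (List.ofFn (fun i : Fin n => x i.succ))) (x 0)
    rw [← ih (fun i : Fin n => x i.succ)]
    ext y
    constructor
    · rintro ⟨c, hc, rfl⟩
      refine ⟨∑ i : Fin n, c i.succ • x i.succ, ⟨fun i : Fin n => c i.succ, fun i => hc _, rfl⟩,
        c 0, hc 0, ?_⟩
      rw [Fin.sum_univ_succ]; abel
    · rintro ⟨y', ⟨c, hc, rfl⟩, t, ht, rfl⟩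
      refine ⟨Fin.cons t c, ?_, ?_⟩
      · intro i
        refine Fin.cases ?_ ?_ i
        · simpa using ht
        · intro k; simpa using hc k
      · rw [Fin.sum_univ_succ]; simp [Fin.cons_succ]; abel

lemma coneFin_eq_coneL_rev {n : ℕ} (x : Fin n → E d) :
    coneFin x = coneL (List.ofFn x).reverse := by
  rw [coneFin_eq_coneL]
  exact coneL_perm (List.reverse_perm (List.ofFn x)).symm

lemma lexTri_eq_lexTriL {n : ℕ} (x : Fin n → E d) :
    lexTri n x = lexTriL (List.ofFn x).reverse := by
  induction n with
  | zero => simp [lexTri, lexTriL]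
  | succ n ih =>
    have hofn : (List.ofFn x).reverse
        = x (Fin.last n) :: (List.ofFn (fun i => x i.castSucc)).reverse := by
      rw [List.ofFn_succ' x]
      simp
    rw [hofn]
    show lexTri (n+1) x = lexTriL _ ∪ newCones (coneL _) _ (lexTriL _)
    rw [← ih, ← coneFin_eq_coneL_rev]
    rfl

end LexFront

namespace LexFront

variable {d : ℕ}

/-- if `u ∉ S` and `t • u ∈ S` then `t = 0`. -/
lemma smul_mem_eq_zero {S : Submodule ℝ (E d)} {u : E d} (hu : u ∉ S)
    {t : ℝ} (h : t • u ∈ S) : t = 0 := by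
  by_contra ht
  exact hu (by simpa [smul_smul, inv_mul_cancel₀ ht] using S.smul_mem t⁻¹ h)

lemma segment_subset_span {S : Submodule ℝ (E d)} {v y z : E d}
    (hv : v ∈ S) (hy : y ∈ S) (hz : z ∈ segment ℝ v y) : z ∈ S := by
  obtain ⟨a, b, _, _, _, rfl⟩ := hz
  exact S.add_mem (S.smul_mem a hv) (S.smul_mem b hy)

/-- Everything inside the span is visible from a point outside the span. -/
lemma visible_of_not_mem_span {S : Submodule ℝ (E d)} {D σ : Set (E d)} {u : E d}
    (hD : D ⊆ (S : Set (E d))) (hσ : σ ⊆ (S : Set (E d))) (hu : u ∉ S) :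
    VisibleFrom D u σ := by
  constructor
  · exact fun h => hu (hD h)
  · rintro y hy z ⟨a, b, ha, hb, hab, rfl⟩ hzD
    have hyS : y ∈ S := hσ hy
    have hzS : (a • u + b • y : E d) ∈ S := hD hzD
    have : a • u ∈ S := by
      have := S.sub_mem hzS (S.smul_mem b hyS); simpa using this
    have ha0 : a = 0 := smul_mem_eq_zero hu this
    have hb1 : b = 1 := by linarith
    simp [ha0, hb1]

lemma mem_addRay_span_iff {S : Submodule ℝ (E d)} {D : Set (E d)} {u : E d}
    (hD : D ⊆ (S : Set (E d))) (hu : u ∉ S) {z : E d} (hz : z ∈ S) :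
    z ∈ addRay D u ↔ z ∈ D := by
  constructor
  · rintro ⟨y, hy, t, ht, rfl⟩
    have : t • u ∈ S := by
      have := S.sub_mem hz (hD hy : y ∈ S); simpa using this
    rw [smul_mem_eq_zero hu this] at *
    simpa using hy
  · intro h; exact mem_addRay_self h u

lemma addRay_subset_span {S : Submodule ℝ (E d)} {σ : Set (E d)} {a : E d}
    (hσ : σ ⊆ (S : Set (E d))) (ha : a ∈ S) : addRay σ a ⊆ (S : Set (E d)) := by
  rintro z ⟨y, hy, t, ht, rfl⟩
  exact S.add_mem (hσ hy) (S.smul_mem t ha)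

/-- Claim (i): visibility of a set inside the span is unaffected by adding a ray
outside the span to the cone. -/
lemma visible_addRay_iff {S : Submodule ℝ (E d)} {D σ : Set (E d)} {u v : E d}
    (hD : D ⊆ (S : Set (E d))) (hσ : σ ⊆ (S : Set (E d))) (hv : v ∈ S) (hu : u ∉ S) :
    VisibleFrom (addRay D u) v σ ↔ VisibleFrom D v σ := by
  constructor
  · rintro ⟨hv1, hv2⟩
    refine ⟨fun h => hv1 (subset_addRay D u h), ?_⟩
    intro y hy z hz hzD
    exact hv2 y hy z hz (subset_addRay D u hzD)
  · rintro ⟨hv1, hv2⟩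
    refine ⟨fun h => hv1 ((mem_addRay_span_iff hD hu hv).mp h), ?_⟩
    intro y hy z hz hzDu
    have hzS : z ∈ S := segment_subset_span hv (hσ hy) hz
    exact hv2 y hy z hz ((mem_addRay_span_iff hD hu hzS).mp hzDu)

/-- Claim (ii): visibility lifts along a ray outside the span. -/
lemma visible_addRay_lift_iff {S : Submodule ℝ (E d)} {D σ : Set (E d)} {u v : E d}
    (hD : D ⊆ (S : Set (E d))) (hσ : σ ⊆ D) (hv : v ∈ S) (hvD : v ∉ D) (hu : u ∉ S) :
    VisibleFrom (addRay D u) v (addRay σ u) ↔ VisibleFrom D v σ := by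
  have hσS : σ ⊆ (S : Set (E d)) := hσ.trans hD
  constructor
  · rintro ⟨hv1, hv2⟩
    refine ⟨hvD, ?_⟩
    intro y hy z hz hzD
    exact hv2 y (mem_addRay_self hy u) z hz (subset_addRay D u hzD)
  · rintro ⟨_, hv2⟩
    constructor
    · intro h
      exact hvD ((mem_addRay_span_iff hD hu hv).mp h)
    · rintro y ⟨w, hw, t, ht, rfl⟩ z ⟨a, b, ha, hb, hab, rfl⟩ hzDu
      -- z = a•v + b•(w + t•u) = (a•v + b•w) + (b*t)•u
      obtain ⟨p, hp, r, hr, hzeq⟩ := hzDu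
      have hzS' : a • v + b • w ∈ S := by
        exact S.add_mem (S.smul_mem a hv) (S.smul_mem b (hD (hσ hw)))
      -- from hzeq : a•v + b•(w + t•u) = p + r•u
      have key : ((b*t - r) • u : E d) = p - (a • v + b • w) := by
        have : a • v + b • (w + t • u) = p + r • u := hzeq
        rw [smul_add, smul_smul] at this
        have := congrArg (fun q => q - (a • v + b • w) - r • u) this
        rw [sub_smul]
        abel_nf
        abel_nf at this
        linear_combination (norm := module) this
      have : ((b*t - r) • u : E d) ∈ S := by
        rw [key]; exact S.sub_mem (hD hp) hzS'
      have hbt : b * t - r = 0 := smul_mem_eq_zero hu this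
      have hpeq : p = a • v + b • w := by
        have h0 : p - (a • v + b • w) = 0 := by rw [← key, hbt]; simp
        exact sub_eq_zero.mp h0
      have hseg : a • v + b • w ∈ segment ℝ v w := ⟨a, b, ha, hb, hab, rfl⟩
      have hmem : a • v + b • w ∈ D := by rw [← hpeq]; exact hp
      have hw' : a • v + b • w = w := hv2 w hw _ hseg hmem
      -- conclude a = 0
      have hane : a = 0 := by
        by_contra ha0
        have hvw : v = w := by
          have : a • v = (1 - b) • w := by
            have := hw'
            have h1 : a • v = w - b • w := by
              have := congrArg (fun q => q - b • w) this
              simpa using this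
            rw [h1, sub_smul, one_smul]
          have hab' : (1 - b) = a := by linarith
          rw [hab'] at this
          have := congrArg (fun q => a⁻¹ • q) this
          simpa [smul_smul, inv_mul_cancel₀ ha0] using this
        exact hvD (hvw ▸ (hσ hw))
      have hb1 : b = 1 := by linarith
      rw [hane, hb1]
      simp

end LexFront

namespace LexFront

variable {d : ℕ}

lemma newCones_union (D : Set (E d)) (a : E d) (T₁ T₂ : Set (Set (E d))) :
    newCones D a (T₁ ∪ T₂) = newCones D a T₁ ∪ newCones D a T₂ := by
  ext τ
  constructor
  · rintro ⟨σ, (h | h), hvis, rfl⟩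
    · exact Or.inl ⟨σ, h, hvis, rfl⟩
    · exact Or.inr ⟨σ, h, hvis, rfl⟩
  · rintro (⟨σ, h, hvis, rfl⟩ | ⟨σ, h, hvis, rfl⟩)
    · exact ⟨σ, Or.inl h, hvis, rfl⟩
    · exact ⟨σ, Or.inr h, hvis, rfl⟩

lemma newCones_empty_of_mem {D : Set (E d)} {a : E d} (ha : a ∈ D)
    (T : Set (Set (E d))) : newCones D a T = ∅ := by
  ext τ
  simp only [newCones, Set.mem_setOf_eq, Set.mem_empty_iff_false, iff_false]
  rintro ⟨σ, _, ⟨hnot, _⟩, _⟩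
  exact hnot ha

/-- when everything is visible, `newCones` is just the image under adding the ray. -/
lemma newCones_eq_image {D : Set (E d)} {a : E d} {T : Set (Set (E d))}
    (h : ∀ σ ∈ T, VisibleFrom D a σ) :
    newCones D a T = (fun σ => addRay σ a) '' T := by
  ext τ
  constructor
  · rintro ⟨σ, hσ, _, rfl⟩; exact ⟨σ, hσ, rfl⟩
  · rintro ⟨σ, hσ, rfl⟩; exact ⟨σ, hσ, h σ hσ, rfl⟩

lemma newCones_congr {D D' : Set (E d)} {a : E d} {T : Set (Set (E d))}
    (h : ∀ σ ∈ T, VisibleFrom D a σ ↔ VisibleFrom D' a σ) :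
    newCones D a T = newCones D' a T := by
  ext τ
  constructor
  · rintro ⟨σ, hσ, hvis, rfl⟩; exact ⟨σ, hσ, (h σ hσ).mp hvis, rfl⟩
  · rintro ⟨σ, hσ, hvis, rfl⟩; exact ⟨σ, hσ, (h σ hσ).mpr hvis, rfl⟩

/-- **Core swap lemma**: placing `v` (in the span) then `u` (outside the span)
yields the same triangulation as placing `u` then `v`.  The head of the list is
placed last, so here `Q ++ [？]`... concretely: `u::v::Q` places `Q` first then
`v` then `u`. -/
lemma lexTriL_swap_core {Q : List (E d)} {u v : E d}
    (hv : v ∈ spanM Q) (hu : u ∉ spanM Q) :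
    lexTriL (u :: v :: Q) = lexTriL (v :: u :: Q) := by
  set S := spanM Q with hS
  set D := coneL Q with hD
  set Λ := lexTriL Q with hΛ
  have hDS : D ⊆ (S : Set (E d)) := coneL_subset_spanM Q
  have hΛS : ∀ σ ∈ Λ, σ ⊆ (S : Set (E d)) := fun σ h => mem_lexTriL_subset_spanM h
  have hΛD : ∀ σ ∈ Λ, σ ⊆ D := fun σ h => mem_lexTriL_subset_coneL h
  by_cases hvD : v ∈ D
  · -- v already in the cone: nothing happens when placing v
    have h1 : lexTriL (v :: Q) = Λ := by
      show Λ ∪ newCones D v Λ = Λ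
      rw [newCones_empty_of_mem hvD, Set.union_empty]
    have h2 : coneL (v :: Q) = D := coneL_cons_of_mem hvD
    have h3 : lexTriL (u :: v :: Q) = Λ ∪ newCones D u Λ := by
      show lexTriL (v :: Q) ∪ newCones (coneL (v :: Q)) u (lexTriL (v :: Q)) = _
      rw [h1, h2]
    have h4 : lexTriL (v :: u :: Q) = lexTriL (u :: Q) := by
      show lexTriL (u :: Q) ∪ newCones (coneL (u :: Q)) v (lexTriL (u :: Q))
          = lexTriL (u :: Q)
      have hcu : coneL (u :: Q) = addRay D u := rfl
      rw [hcu, newCones_empty_of_mem (subset_addRay D u hvD), Set.union_empty]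
    rw [h3, h4]; rfl
  · -- v not in the cone
    have hvS : v ∈ S := hv
    have huD : u ∉ D := fun h => hu (hDS h)
    -- abbreviations
    set Nv := newCones D v Λ with hNv
    have hNvS : ∀ σ ∈ Nv, σ ⊆ (S : Set (E d)) := by
      rintro τ ⟨σ, hσ, _, rfl⟩
      exact addRay_subset_span (hΛS σ hσ) hvS
    -- LHS
    have hL1 : lexTriL (v :: Q) = Λ ∪ Nv := rfl
    have hDv : coneL (v :: Q) = addRay D v := rfl
    have hDvS : coneL (v :: Q) ⊆ (S : Set (E d)) := addRay_subset_span hDS hvS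
    have hallvisL : ∀ σ ∈ Λ ∪ Nv, VisibleFrom (coneL (v :: Q)) u σ := by
      rintro σ (h | h)
      · exact visible_of_not_mem_span hDvS (hΛS σ h) hu
      · exact visible_of_not_mem_span hDvS (hNvS σ h) hu
    have hLHS : lexTriL (u :: v :: Q)
        = (Λ ∪ Nv) ∪ ((fun σ => addRay σ u) '' Λ ∪ (fun σ => addRay σ u) '' Nv) := by
      show lexTriL (v :: Q) ∪ newCones (coneL (v :: Q)) u (lexTriL (v :: Q)) = _
      rw [hL1, newCones_eq_image (by rw [← hL1] at hallvisL ⊢; exact hallvisL),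
        Set.image_union]
    -- RHS
    have hallvisR : ∀ σ ∈ Λ, VisibleFrom D u σ :=
      fun σ h => visible_of_not_mem_span hDS (hΛS σ h) hu
    have hR1 : lexTriL (u :: Q) = Λ ∪ (fun σ => addRay σ u) '' Λ := by
      show Λ ∪ newCones D u Λ = _
      rw [newCones_eq_image hallvisR]
    have hDu : coneL (u :: Q) = addRay D u := rfl
    -- visibility transfer for old cones (claim i)
    have htransfer : newCones (addRay D u) v Λ = Nv :=
      newCones_congr (fun σ h => visible_addRay_iff hDS (hΛS σ h) hvS hu)
    -- visibility transfer for new cones (claim ii)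
    have hlift : newCones (addRay D u) v ((fun σ => addRay σ u) '' Λ)
        = (fun σ => addRay σ u) '' Nv := by
      ext τ
      constructor
      · rintro ⟨τ', ⟨σ, hσ, rfl⟩, hvis, rfl⟩
        have hvis' : VisibleFrom D v σ :=
          (visible_addRay_lift_iff hDS (hΛD σ hσ) hvS hvD hu).mp hvis
        exact ⟨addRay σ v, ⟨σ, hσ, hvis', rfl⟩, addRay_comm σ v u⟩
      · rintro ⟨τ', ⟨σ, hσ, hvis', rfl⟩, rfl⟩
        refine ⟨addRay σ u, ⟨σ, hσ, rfl⟩,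
          (visible_addRay_lift_iff hDS (hΛD σ hσ) hvS hvD hu).mpr hvis', ?_⟩
        show addRay (addRay σ v) u = addRay (addRay σ u) v
        exact addRay_comm σ v u
    have hRHS : lexTriL (v :: u :: Q)
        = (Λ ∪ (fun σ => addRay σ u) '' Λ) ∪ (Nv ∪ (fun σ => addRay σ u) '' Nv) := by
      show lexTriL (u :: Q) ∪ newCones (coneL (u :: Q)) v (lexTriL (u :: Q)) = _
      rw [hR1, hDu, newCones_union, htransfer, hlift]
    rw [hLHS, hRHS]
    ext τ
    simp only [Set.mem_union]
    tauto

lemma coneL_swap (Q : List (E d)) (u v : E d) :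
    coneL (u :: v :: Q) = coneL (v :: u :: Q) :=
  coneL_perm (List.Perm.swap v u Q)

lemma lexTriL_append_congr (T : List (E d)) {L₁ L₂ : List (E d)}
    (hperm : L₁.Perm L₂) (h₁ : lexTriL L₁ = lexTriL L₂) :
    lexTriL (T ++ L₁) = lexTriL (T ++ L₂) := by
  induction T with
  | nil => exact h₁
  | cons a T ih =>
    have hc : coneL (T ++ L₁) = coneL (T ++ L₂) :=
      coneL_perm (List.Perm.append_left T hperm)
    show lexTriL (T ++ L₁) ∪ newCones (coneL (T ++ L₁)) a (lexTriL (T ++ L₁)) = _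
    rw [ih, hc]
    rfl

end LexFront

namespace LexFront

variable {d : ℕ}

/-- placement-order version: the HEAD of the list is placed *first*. -/
def lexTriP (l : List (E d)) : Set (Set (E d)) := lexTriL l.reverse

lemma spanM_congr {l₁ l₂ : List (E d)} (h : ∀ a, a ∈ l₁ ↔ a ∈ l₂) :
    spanM l₁ = spanM l₂ := by
  unfold spanM; congr 1; ext a; exact h a

lemma spanM_reverse (l : List (E d)) : spanM l.reverse = spanM l :=
  spanM_congr (by simp)

lemma lexTriP_swap (P R : List (E d)) {u v : E d}
    (hv : v ∈ spanM P) (hu : u ∉ spanM P) :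
    lexTriP (P ++ v :: u :: R) = lexTriP (P ++ u :: v :: R) := by
  unfold lexTriP
  have h1 : (P ++ v :: u :: R).reverse = R.reverse ++ (u :: v :: P.reverse) := by
    simp
  have h2 : (P ++ u :: v :: R).reverse = R.reverse ++ (v :: u :: P.reverse) := by
    simp
  rw [h1, h2]
  have hv' : v ∈ spanM P.reverse := by rw [spanM_reverse]; exact hv
  have hu' : u ∉ spanM P.reverse := by rw [spanM_reverse]; exact hu
  exact lexTriL_append_congr R.reverse (List.Perm.swap v u P.reverse)
    (lexTriL_swap_core hv' hu')

lemma lexTriP_move (P B R : List (E d)) {u : E d}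
    (hB : ∀ b ∈ B, b ∈ spanM P) (hu : u ∉ spanM P) :
    lexTriP (P ++ B ++ u :: R) = lexTriP (P ++ u :: (B ++ R)) := by
  induction B generalizing P with
  | nil => simp
  | cons b B ih =>
    have hbP : b ∈ spanM P := hB b (by simp)
    have hsp : spanM (P ++ [b]) = spanM P := by
      have h1 : spanM (P ++ [b]) = Submodule.span ℝ (insert b {a | a ∈ P}) := by
        unfold spanM; congr 1; ext a; simp [or_comm]
      rw [h1, Submodule.span_insert_eq_span hbP]; rfl
    have e1 : P ++ (b :: B) ++ u :: R = (P ++ [b]) ++ B ++ u :: R := by simp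
    have e2 : (P ++ [b]) ++ u :: (B ++ R) = P ++ b :: u :: (B ++ R) := by simp
    have e3 : P ++ u :: (b :: B ++ R) = P ++ u :: b :: (B ++ R) := by simp
    rw [e1, ih (P ++ [b]) (by rw [hsp]; intro a ha; exact hB a (by simp [ha]))
        (by rw [hsp]; exact hu), e2, e3]
    exact lexTriP_swap P (B ++ R) hbP hu

end LexFront

namespace LexFront

/-- counting bound for the monotone enumeration of a finset: if `A ⊆ K` has more
than `s` elements, all `≤ c`, then the `s`-th element of `K` is `≤ c`. -/
lemma orderEmbOfFin_le_of_card {α : Type*} [LinearOrder α] {K : Finset α} {k : ℕ}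
    (hK : K.card = k) (A : Finset α) (hA : A ⊆ K) {c : α} (hc : ∀ a ∈ A, a ≤ c)
    {s : Fin k} (hcard : (s : ℕ) < A.card) : K.orderEmbOfFin hK s ≤ c := by
  by_contra hgt
  push_neg at hgt
  classical
  set f := K.orderEmbOfFin hK with hf
  have hex : ∀ a ∈ A, ∃ r : Fin k, f r = a := by
    intro a ha
    have h1 : a ∈ (K : Set α) := hA ha
    rw [← Finset.range_orderEmbOfFin K hK] at h1
    exact h1
  set φ : α → ℕ := fun a => if h : ∃ r : Fin k, f r = a then
    ((Classical.choose h : Fin k) : ℕ) else 0 with hφdef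
  have hval : ∀ a, a ∈ A → ∃ r : Fin k, f r = a ∧ φ a = (r : ℕ) := by
    intro a ha
    refine ⟨Classical.choose (hex a ha), Classical.choose_spec (hex a ha), ?_⟩
    simp only [hφdef]
    rw [dif_pos (hex a ha)]
  have hmaps : ∀ a ∈ A, φ a ∈ Finset.range (s : ℕ) := by
    intro a ha
    obtain ⟨r, hr, hφa⟩ := hval a ha
    have hfr : f r ≤ c := hr ▸ hc a ha
    have hrs : r < s := by
      by_contra hrs
      push_neg at hrs
      exact absurd (le_trans (f.strictMono.monotone hrs) hfr) (not_le.mpr hgt)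
    rw [Finset.mem_range, hφa]
    exact hrs
  have hinj : Set.InjOn φ ↑A := by
    intro a₁ h₁ a₂ h₂ heq
    obtain ⟨r₁, hr₁, e₁⟩ := hval a₁ h₁
    obtain ⟨r₂, hr₂, e₂⟩ := hval a₂ h₂
    have : r₁ = r₂ := Fin.val_injective (by rw [← e₁, ← e₂, heq])
    rw [← hr₁, ← hr₂, this]
  have hcard' := Finset.card_le_card_of_injOn φ hmaps hinj
  rw [Finset.card_range] at hcard'
  omega

variable {d m : ℕ}

/-- **Greedy lemma**: the lex-smallest independent index family is greedy — any
index outside it lies in the span of the earlier chosen ones. -/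
lemma greedy (x : Fin (d + m) → E d)
    (i : Fin d → Fin (d + m)) (hi : StrictMono i)
    (hind : LinearIndependent ℝ (x ∘ i))
    (hmin : ∀ i' : Fin d → Fin (d + m), StrictMono i' →
      LinearIndependent ℝ (x ∘ i') →
      ¬ Pi.Lex (· < ·) (· < ·) i' i)
    (q : Fin (d + m)) (hq : q ∉ Set.range i) :
    x q ∈ Submodule.span ℝ ((x ∘ i) '' {s : Fin d | i s < q}) := by
  classical
  by_contra hqspan
  -- the range of x∘i spans everything (d independent vectors in ℝ^d)
  have hne : Nonempty (Fin d) := by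
    rcases Nat.eq_zero_or_pos d with hd | hd
    · exfalso
      apply hqspan
      subst hd
      -- E 0 is trivial hence x q = 0
      have : x q = 0 := by
        funext k; exact absurd k.pos (by omega)
      rw [this]; exact Submodule.zero_mem _
    · exact ⟨⟨0, hd⟩⟩
  have hcardeq : Fintype.card (Fin d) = Module.finrank ℝ (E d) := by
    simp [Module.finrank_pi]
  set b := basisOfLinearIndependentOfCardEqFinrank hind hcardeq with hb
  have hbcoe : ⇑b = x ∘ i := coe_basisOfLinearIndependentOfCardEqFinrank hind hcardeq
  -- the first index `t` with `q < i t` exists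
  have hexT : ∃ s : Fin d, q < i s := by
    by_contra hT
    push_neg at hT
    apply hqspan
    have hall : {s : Fin d | i s < q} = Set.univ := by
      ext s
      simp only [Set.mem_setOf_eq, Set.mem_univ, iff_true]
      exact lt_of_le_of_ne (hT s) (fun h => hq ⟨s, h⟩)
    rw [hall, Set.image_univ]
    have htop : Submodule.span ℝ (Set.range (x ∘ i)) = ⊤ := by
      rw [← hbcoe]; exact b.span_eq
    rw [htop]
    trivial
  set T : Finset (Fin d) := Finset.univ.filter (fun s => q < i s) with hT
  have hTne : T.Nonempty := by
    obtain ⟨s, hs⟩ := hexT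
    exact ⟨s, by simp [hT, hs]⟩
  set t := T.min' hTne with ht
  have hqt : q < i t := by
    have := T.min'_mem hTne
    simp only [hT, Finset.mem_filter] at this
    exact this.2
  have hlt : ∀ s : Fin d, s < t → i s < q := by
    intro s hs
    have hsT : s ∉ T := fun h => absurd (T.min'_le s h) (not_le.mpr hs)
    simp only [hT, Finset.mem_filter, Finset.mem_univ, true_and, not_lt] at hsT
    exact lt_of_le_of_ne hsT (fun h => hq ⟨s, h⟩)
  have hge : ∀ s : Fin d, t ≤ s → q < i s := fun s hs =>
    lt_of_lt_of_le hqt (hi.monotone hs)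
  -- a coordinate `s₀ ≥ t` with nonzero coefficient
  set c := b.repr (x q) with hc
  have hs₀ : ∃ s₀ : Fin d, t ≤ s₀ ∧ c s₀ ≠ 0 := by
    by_contra hs₀
    push_neg at hs₀
    apply hqspan
    have hrepr : x q = ∑ s : Fin d, c s • (x ∘ i) s := by
      conv_lhs => rw [← b.sum_repr (x q)]
      simp [hbcoe, hc]
    rw [hrepr]
    apply Submodule.sum_mem
    intro s _
    by_cases hst : s < t
    · exact Submodule.smul_mem _ _
        (Submodule.subset_span ⟨s, hlt s hst, rfl⟩)
    · rw [hs₀ s (not_lt.mp hst), zero_smul]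
      exact Submodule.zero_mem _
  obtain ⟨s₀, hts₀, hc₀⟩ := hs₀
  -- the new index set
  set K : Finset (Fin (d + m)) :=
    insert q ((Finset.univ.erase s₀).image i) with hK
  have hqim : q ∉ (Finset.univ.erase s₀).image i := by
    intro h
    obtain ⟨l, -, hl⟩ := Finset.mem_image.mp h
    exact hq ⟨l, hl⟩
  have hKcard : K.card = d := by
    rw [hK, Finset.card_insert_of_notMem hqim,
      Finset.card_image_of_injective _ hi.injective,
      Finset.card_erase_of_mem (Finset.mem_univ _)]
    have := Fin.pos s₀
    simp
    omega
  set i' : Fin d → Fin (d + m) := fun r => K.orderEmbOfFin hKcard r with hi'def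
  have hi'mono : StrictMono i' := (K.orderEmbOfFin hKcard).strictMono
  have hmemK : ∀ l : Fin d, l ≠ s₀ → i l ∈ K := by
    intro l hl
    exact Finset.mem_insert_of_mem
      (Finset.mem_image.mpr ⟨l, Finset.mem_erase.mpr ⟨hl, Finset.mem_univ _⟩, rfl⟩)
  have hqK : q ∈ K := Finset.mem_insert_self _ _
  -- bounds on the enumeration
  have hle : ∀ s : Fin d, s < t → i' s ≤ i s := by
    intro s hs
    apply orderEmbOfFin_le_of_card hKcard ((Finset.Iic s).image i)
    · intro a ha
      obtain ⟨l, hl, rfl⟩ := Finset.mem_image.mp ha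
      refine hmemK l (fun h => ?_)
      rw [h] at hl
      have h1 : s₀ ≤ s := Finset.mem_Iic.mp hl
      exact absurd hs (not_lt.mpr (le_trans hts₀ h1))
    · intro a ha
      obtain ⟨l, hl, rfl⟩ := Finset.mem_image.mp ha
      exact hi.monotone (Finset.mem_Iic.mp hl)
    · rw [Finset.card_image_of_injective _ hi.injective, Fin.card_Iic]
      omega
  have hle_t : i' t ≤ q := by
    apply orderEmbOfFin_le_of_card hKcard (insert q ((Finset.Iio t).image i))
    · intro a ha
      rcases Finset.mem_insert.mp ha with rfl | ha
      · exact hqK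
      · obtain ⟨l, hl, rfl⟩ := Finset.mem_image.mp ha
        refine hmemK l (fun h => ?_)
        rw [h] at hl
        exact absurd hts₀ (not_le.mpr (Finset.mem_Iio.mp hl))
    · intro a ha
      rcases Finset.mem_insert.mp ha with rfl | ha
      · exact le_refl _
      · obtain ⟨l, hl, rfl⟩ := Finset.mem_image.mp ha
        exact le_of_lt (hlt l (Finset.mem_Iio.mp hl))
    · have hqim' : q ∉ (Finset.Iio t).image i := by
        intro h
        obtain ⟨l, -, hl⟩ := Finset.mem_image.mp h
        exact hq ⟨l, hl⟩
      rw [Finset.card_insert_of_notMem hqim',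
        Finset.card_image_of_injective _ hi.injective, Fin.card_Iio]
      omega
  -- the lex inequality
  have hdiffne : (Finset.univ.filter (fun s : Fin d => i' s ≠ i s)).Nonempty := by
    refine ⟨t, ?_⟩
    simp only [Finset.mem_filter, Finset.mem_univ, true_and]
    exact fun h => absurd (h ▸ hle_t) (not_le.mpr hqt)
  set k := (Finset.univ.filter (fun s : Fin d => i' s ≠ i s)).min' hdiffne with hk
  have hkne : i' k ≠ i k := by
    have := Finset.min'_mem _ hdiffne
    simp only [Finset.mem_filter] at this
    exact this.2
  have hkt : k ≤ t := by
    apply Finset.min'_le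
    simp only [Finset.mem_filter, Finset.mem_univ, true_and]
    exact fun h => absurd (h ▸ hle_t) (not_le.mpr hqt)
  have hkle : i' k ≤ i k := by
    rcases lt_or_eq_of_le hkt with h | h
    · exact hle k h
    · rw [h]; exact le_trans hle_t (le_of_lt hqt)
  have hlex : Pi.Lex (· < ·) (· < ·) i' i := by
    refine ⟨k, ?_, lt_of_le_of_ne hkle hkne⟩
    intro l hl
    by_contra hne
    exact absurd (Finset.min'_le _ l (by
      simp only [Finset.mem_filter, Finset.mem_univ, true_and]; exact hne))
      (not_le.mpr hl)
  -- linear independence of x ∘ i'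
  set g : Fin d → E d := Function.update (x ∘ i) s₀ (x q) with hg
  have hgind : LinearIndependent ℝ g := by
    rw [Fintype.linearIndependent_iff]
    intro a ha
    have hsum : ∑ s : Fin d, a s • g s
        = ∑ s : Fin d, Function.update (fun s => a s • (x ∘ i) s) s₀ (a s₀ • x q) s := by
      apply Finset.sum_congr rfl
      intro s _
      by_cases hs : s = s₀
      · subst hs; simp [hg]
      · simp [hg, Function.update_of_ne hs]
    rw [hsum, Finset.sum_update_of_mem (Finset.mem_univ _)] at ha
    have hrepr : x q = ∑ s : Fin d, c s • (x ∘ i) s := by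
      conv_lhs => rw [← b.sum_repr (x q)]
      simp [hbcoe, hc]
    set a'' : Fin d → ℝ := fun s => a s₀ * c s + if s = s₀ then 0 else a s with ha''
    have hsum2 : ∑ s : Fin d, a'' s • (x ∘ i) s = 0 := by
      have e1 : ∑ s : Fin d, a'' s • (x ∘ i) s
          = ∑ s : Fin d, (a s₀ * c s) • (x ∘ i) s
            + ∑ s : Fin d, (if s = s₀ then 0 else a s) • (x ∘ i) s := by
        rw [← Finset.sum_add_distrib]
        apply Finset.sum_congr rfl
        intro s _
        rw [ha'', add_smul]
      have e2 : ∑ s : Fin d, (a s₀ * c s) • (x ∘ i) s = a s₀ • x q := by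
        rw [hrepr, Finset.smul_sum]
        apply Finset.sum_congr rfl
        intro s _
        rw [smul_smul]
      have e3 : ∑ s : Fin d, (if s = s₀ then 0 else a s) • (x ∘ i) s
          = ∑ s ∈ Finset.univ \ {s₀}, a s • (x ∘ i) s := by
        rw [Finset.sum_eq_sum_sdiff_singleton_add (Finset.mem_univ s₀)]
        have h00 : (if s₀ = s₀ then (0:ℝ) else a s₀) = 0 := if_pos rfl
        rw [h00, zero_smul, add_zero]
        refine Finset.sum_congr rfl (fun s hs => ?_)
        simp only [Finset.mem_sdiff, Finset.mem_singleton] at hs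
        rw [if_neg hs.2]
      calc ∑ s : Fin d, a'' s • (x ∘ i) s
          = a s₀ • x q + ∑ s ∈ Finset.univ \ {s₀}, a s • (x ∘ i) s := by
            rw [e1, e2, e3]
        _ = 0 := ha
    have hz := Fintype.linearIndependent_iff.mp hind a'' hsum2
    have ha₀ : a s₀ = 0 := by
      have h1 := hz s₀
      simp only [ha''] at h1
      have h2 : a s₀ * c s₀ = 0 := by simpa using h1
      exact (mul_eq_zero.mp h2).resolve_right hc₀
    intro s
    by_cases hs : s = s₀
    · rw [hs]; exact ha₀
    · have := hz s
      simp only [ha'', if_neg hs, ha₀, zero_mul, zero_add] at this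
      exact this
  -- reindexing
  have hKmem : ∀ r : Fin d, i' r ∈ K := fun r => K.orderEmbOfFin_mem hKcard r
  set e : Fin d → Fin d := fun r =>
    if h : i' r = q then s₀
    else Classical.choose (Finset.mem_image.mp
      ((Finset.mem_insert.mp (hKmem r)).resolve_left h)) with he
  have hespec : ∀ r (h : ¬ i' r = q),
      e r ∈ Finset.univ.erase s₀ ∧ i (e r) = i' r := by
    intro r h
    have hspec := Classical.choose_spec (Finset.mem_image.mp
      ((Finset.mem_insert.mp (hKmem r)).resolve_left h))
    constructor
    · simp only [he]; rw [dif_neg h]; exact hspec.1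
    · simp only [he]; rw [dif_neg h]; exact hspec.2
  have hxe : x ∘ i' = g ∘ e := by
    funext r
    by_cases h : i' r = q
    · have he1 : e r = s₀ := by simp only [he]; rw [dif_pos h]
      show x (i' r) = Function.update (x ∘ i) s₀ (x q) (e r)
      rw [he1, Function.update_self, h]
    · obtain ⟨h1, h2⟩ := hespec r h
      have hne : e r ≠ s₀ := (Finset.mem_erase.mp h1).1
      simp only [Function.comp_apply, hg, Function.update_of_ne hne, h2]
  have heinj : Function.Injective e := by
    intro r₁ r₂ hr
    by_cases h₁ : i' r₁ = q <;> by_cases h₂ : i' r₂ = q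
    · exact hi'mono.injective (h₁.trans h₂.symm)
    · exfalso
      have := (Finset.mem_erase.mp (hespec r₂ h₂).1).1
      rw [← hr] at this
      simp only [he, dif_pos h₁] at this
      exact this rfl
    · exfalso
      have := (Finset.mem_erase.mp (hespec r₁ h₁).1).1
      rw [hr] at this
      simp only [he, dif_pos h₂] at this
      exact this rfl
    · apply hi'mono.injective
      rw [← (hespec r₁ h₁).2, ← (hespec r₂ h₂).2, hr]
  have hind' : LinearIndependent ℝ (x ∘ i') := by
    rw [hxe]
    exact hgind.comp e heinj
  exact hmin i' hi'mono hind' hlex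

end LexFront

namespace LexFront

/-- splitting a sorted list at a member. -/
lemma sorted_split {n : ℕ} : ∀ {l : List (Fin n)}, l.Pairwise (· < ·) →
    ∀ {a : Fin n}, a ∈ l →
    l = l.filter (fun b => decide (b < a)) ++ a :: l.filter (fun b => decide (a < b)) := by
  intro l hl
  induction l with
  | nil => intro a ha; cases ha
  | cons c l ih =>
    intro a ha
    have hcl : ∀ b ∈ l, c < b := fun b hb => (List.pairwise_cons.mp hl).1 b hb
    rcases List.mem_cons.mp ha with rfl | ha
    · have h1 : List.filter (fun b => decide (b < a)) (a :: l) = [] := by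
        rw [List.filter_cons]
        rw [if_neg (by simp)]
        rw [List.filter_eq_nil_iff]
        intro b hb
        simp only [decide_eq_true_eq, not_lt]
        exact le_of_lt (hcl b hb)
      have h2 : List.filter (fun b => decide (a < b)) (a :: l) = l := by
        rw [List.filter_cons]
        rw [if_neg (by simp)]
        exact List.filter_eq_self.mpr (fun b hb => by
          simp only [decide_eq_true_eq]; exact hcl b hb)
      rw [h1, h2]
      simp
    · have hca : c < a := hcl a ha
      have h1 : List.filter (fun b => decide (b < a)) (c :: l)
          = c :: List.filter (fun b => decide (b < a)) l := by
        rw [List.filter_cons, if_pos (by simpa using hca)]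
      have h2 : List.filter (fun b => decide (a < b)) (c :: l)
          = List.filter (fun b => decide (a < b)) l := by
        rw [List.filter_cons, if_neg (by simp [asymm hca])]
      rw [h1, h2]
      have := ih (List.pairwise_cons.mp hl).2 ha
      rw [List.cons_append]
      rw [← this]

variable {d m : ℕ}

section Sorting

variable (x : Fin (d + m) → E d) (i : Fin d → Fin (d + m))

/-- first `t` chosen indices, as a list. -/
def front (t : ℕ) : List (Fin (d + m)) := (List.ofFn i).take t

/-- remaining indices after removing the first `t` chosen ones, in order. -/
def rest (t : ℕ) : List (Fin (d + m)) :=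
  (List.finRange (d + m)).filter (fun l => decide (l ∉ front i t))

variable {i}

lemma mem_front_iff {t : ℕ} {b : Fin (d + m)} :
    b ∈ front i t ↔ ∃ s : Fin d, (s : ℕ) < t ∧ i s = b := by
  unfold front
  constructor
  · intro hb
    obtain ⟨k, hk, hbk⟩ := List.mem_iff_getElem.mp hb
    have hk' : k < t ⊓ d := by
      simpa [List.length_take, List.length_ofFn] using hk
    rw [List.getElem_take] at hbk
    rw [List.getElem_ofFn] at hbk
    exact ⟨⟨k, lt_of_lt_of_le hk' inf_le_right⟩, lt_of_lt_of_le hk' inf_le_left, hbk⟩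
  · rintro ⟨s, hst, rfl⟩
    apply List.mem_iff_getElem.mpr
    refine ⟨(s : ℕ), ?_, ?_⟩
    · have := s.isLt
      simp only [List.length_take, List.length_ofFn, lt_inf_iff]
      exact ⟨hst, this⟩
    · rw [List.getElem_take, List.getElem_ofFn]

variable (hi : StrictMono i)
include hi

lemma not_mem_front_self {t : ℕ} (ht : t < d) : i ⟨t, ht⟩ ∉ front i t := by
  rw [mem_front_iff]
  rintro ⟨s, hst, hs⟩
  have := hi.injective hs
  rw [this] at hst
  simp at hst

lemma mem_rest_self {t : ℕ} (ht : t < d) : i ⟨t, ht⟩ ∈ rest i t := by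
  rw [rest, List.mem_filter]
  exact ⟨List.mem_finRange _, by simpa using not_mem_front_self hi ht⟩

lemma rest_pairwise (t : ℕ) : (rest i t).Pairwise (· < ·) :=
  List.Pairwise.sublist List.filter_sublist (List.pairwise_lt_finRange _)

lemma rest_split {t : ℕ} (ht : t < d) :
    rest i t = (rest i t).filter (fun b => decide (b < i ⟨t, ht⟩))
      ++ i ⟨t, ht⟩ :: (rest i t).filter (fun b => decide (i ⟨t, ht⟩ < b)) :=
  sorted_split (rest_pairwise hi t) (mem_rest_self hi ht)

lemma front_succ {t : ℕ} (ht : t < d) :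
    front i (t + 1) = front i t ++ [i ⟨t, ht⟩] := by
  rw [front, List.take_succ]
  congr 1
  have hl : t < (List.ofFn i).length := by simpa using ht
  rw [List.getElem?_eq_getElem hl, List.getElem_ofFn]
  rfl

lemma rest_succ {t : ℕ} (ht : t < d) :
    rest i (t + 1) = (rest i t).filter (fun b => decide (b ≠ i ⟨t, ht⟩)) := by
  rw [rest, rest, List.filter_filter]
  apply List.filter_congr
  intro a _
  rw [front_succ hi ht]
  simp only [List.mem_append, List.mem_singleton, decide_eq_true_eq, Bool.and_comm]
  rw [Bool.eq_iff_iff]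
  simp only [Bool.and_eq_true, decide_eq_true_eq]
  tauto

lemma rest_succ_eq_append {t : ℕ} (ht : t < d) :
    rest i (t + 1) = (rest i t).filter (fun b => decide (b < i ⟨t, ht⟩))
      ++ (rest i t).filter (fun b => decide (i ⟨t, ht⟩ < b)) := by
  rw [rest_succ hi ht]
  conv_lhs => rw [rest_split hi ht]
  rw [List.filter_append, List.filter_cons]
  rw [if_neg (by simp)]
  congr 1
  · apply List.filter_eq_self.mpr
    intro a ha
    rw [List.mem_filter] at ha
    simp only [decide_eq_true_eq] at ha ⊢
    exact ne_of_lt ha.2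
  · apply List.filter_eq_self.mpr
    intro a ha
    rw [List.mem_filter] at ha
    simp only [decide_eq_true_eq] at ha ⊢
    exact (ne_of_lt ha.2).symm

end Sorting

end LexFront

namespace LexFront

variable {d m : ℕ}

lemma span_front_eq (x : Fin (d + m) → E d) (i : Fin d → Fin (d + m)) (t : ℕ) :
    spanM (List.map x (front i t))
      = Submodule.span ℝ ((x ∘ i) '' {s : Fin d | (s : ℕ) < t}) := by
  unfold spanM
  congr 1
  ext a
  simp only [Set.mem_setOf_eq, List.mem_map, Set.mem_image]
  constructor
  · rintro ⟨l, hl, rfl⟩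
    obtain ⟨s, hst, rfl⟩ := mem_front_iff.mp hl
    exact ⟨s, hst, rfl⟩
  · rintro ⟨s, hst, rfl⟩
    exact ⟨i s, mem_front_iff.mpr ⟨s, hst, rfl⟩, rfl⟩

lemma sort_aux (x : Fin (d + m) → E d) {i : Fin d → Fin (d + m)} (hi : StrictMono i)
    (hind : LinearIndependent ℝ (x ∘ i))
    (hmin : ∀ i' : Fin d → Fin (d + m), StrictMono i' →
      LinearIndependent ℝ (x ∘ i') →
      ¬ Pi.Lex (· < ·) (· < ·) i' i) :
    ∀ t, t ≤ d →
      lexTriP (List.map x (List.finRange (d + m)))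
        = lexTriP (List.map x (front i t ++ rest i t)) := by
  intro t
  induction t with
  | zero =>
    intro _
    have h0 : front i 0 = [] := rfl
    have h1 : rest i 0 = List.finRange (d + m) :=
      List.filter_eq_self.mpr (fun a _ => by simp [h0])
    rw [h0, h1, List.nil_append]
  | succ t ih =>
    intro htd
    have ht : t < d := Nat.lt_of_succ_le htd
    have ih' := ih (le_of_lt ht)
    set u : Fin (d + m) := i ⟨t, ht⟩ with hu
    set B := (rest i t).filter (fun b => decide (b < u)) with hB
    set C := (rest i t).filter (fun b => decide (u < b)) with hC
    have hsplit : rest i t = B ++ u :: C := rest_split hi ht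
    -- the moved elements lie in the span of the front
    have hBspan : ∀ b ∈ List.map x B, b ∈ spanM (List.map x (front i t)) := by
      intro b hb
      obtain ⟨l, hl, rfl⟩ := List.mem_map.mp hb
      rw [hB, List.mem_filter] at hl
      obtain ⟨hl1, hl2⟩ := hl
      simp only [decide_eq_true_eq] at hl2
      rw [rest, List.mem_filter] at hl1
      have hlf : l ∉ front i t := by simpa using hl1.2
      have hlnr : l ∉ Set.range i := by
        rintro ⟨s, rfl⟩
        by_cases hst : (s : ℕ) < t
        · exact hlf (mem_front_iff.mpr ⟨s, hst, rfl⟩)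
        · have : (⟨t, ht⟩ : Fin d) ≤ s := by
            apply Fin.mk_le_of_le_val
            omega
          exact absurd hl2 (not_lt.mpr (hi.monotone this))
      have hg := greedy x i hi hind hmin l hlnr
      rw [span_front_eq]
      refine Submodule.span_mono (Set.image_mono ?_) hg
      intro s hs
      simp only [Set.mem_setOf_eq] at hs ⊢
      have : s < (⟨t, ht⟩ : Fin d) := hi.lt_iff_lt.mp (lt_trans hs hl2)
      exact this
    have huspan : x u ∉ spanM (List.map x (front i t)) := by
      rw [span_front_eq]
      exact hind.notMem_span_image (by simp)
    calc lexTriP (List.map x (List.finRange (d + m)))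
        = lexTriP (List.map x (front i t ++ rest i t)) := ih'
      _ = lexTriP (List.map x (front i t) ++ List.map x B ++ x u :: List.map x C) := by
          apply congrArg lexTriP
          rw [hsplit]
          simp [List.map_append, List.append_assoc]
      _ = lexTriP (List.map x (front i t) ++ x u :: (List.map x B ++ List.map x C)) :=
          lexTriP_move _ _ _ hBspan huspan
      _ = lexTriP (List.map x (front i (t + 1) ++ rest i (t + 1))) := by
          apply congrArg lexTriP
          rw [front_succ hi ht, rest_succ_eq_append hi ht]
          simp [List.map_append, List.append_assoc]
          exact ⟨rfl, rfl⟩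

end LexFront

open LexFront in
/-- Let `x_1,…,x_n ∈ ℝ^d` (with `n = d + m`) span a cone of
dimension `d`. Let `(i_1,…,i_d)` be the lexicographically smallest index
vector of a rank-`d` subset of `{x_1,…,x_n}` and `j_1 < ⋯ < j_{n-d}` the
complementary indices. Then
`Λ(x_1,…,x_n) = Λ(x_{i_1},…,x_{i_d}, x_{j_1},…,x_{j_{n-d}})`. -/
theorem lexTri_front_loading {d m : ℕ} (x : Fin (d + m) → E d)
    (hdim : setDim (coneFin x) = d)
    (i : Fin d → Fin (d + m)) (hi : StrictMono i)
    (hind : LinearIndependent ℝ (x ∘ i))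
    (hmin : ∀ i' : Fin d → Fin (d + m), StrictMono i' →
      LinearIndependent ℝ (x ∘ i') →
      ¬ Pi.Lex (· < ·) (· < ·) i' i)
    (j : Fin m → Fin (d + m)) (hj : StrictMono j)
    (hcomp : Set.range i ∪ Set.range j = Set.univ)
    (hdisj : Disjoint (Set.range i) (Set.range j)) :
    lexTri (d + m) x = lexTri (d + m) (Fin.append (x ∘ i) (x ∘ j)) := by
  classical
  have hfrontd : front i d = List.ofFn i := by
    unfold front
    exact List.take_of_length_le (by simp)
  have hrestd : rest i d = List.ofFn j := by
    haveI : IsAntisymm (Fin (d + m)) (· < ·) :=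
      ⟨fun a b h1 h2 => absurd h2 (asymm h1)⟩
    have hnd1 : (rest i d).Nodup :=
      (rest_pairwise hi d).imp (fun h => ne_of_lt h)
    have hnd2 : (List.ofFn j).Nodup :=
      (List.pairwise_ofFn.mpr (fun a b hab => hj hab)).imp (fun h => ne_of_lt h)
    have hmem : ∀ a : Fin (d + m), a ∈ rest i d ↔ a ∈ List.ofFn j := by
      intro a
      have h1 : a ∈ rest i d ↔ a ∉ front i d := by
        rw [rest, List.mem_filter]
        simp [List.mem_finRange]
      rw [h1, hfrontd, List.mem_ofFn, List.mem_ofFn]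
      constructor
      · intro h
        rcases (Set.mem_union _ _ _).mp (by rw [hcomp]; exact Set.mem_univ a) with h' | h'
        · exact absurd h' h
        · exact h'
      · intro h h'
        exact Set.disjoint_left.mp hdisj h' h
    exact List.Perm.eq_of_pairwise (fun a b _ _ h1 h2 => absurd h2 (asymm h1))
      (rest_pairwise hi d) (List.pairwise_ofFn.mpr (fun a b hab => hj hab))
      ((List.perm_ext_iff_of_nodup hnd1 hnd2).mpr hmem)
  have happ : List.ofFn (Fin.append (x ∘ i) (x ∘ j))
      = List.ofFn (x ∘ i) ++ List.ofFn (x ∘ j) := by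
    rw [List.ofFn_add]
    congr 1
    · exact congrArg List.ofFn (funext fun s => Fin.append_left _ _ s)
    · exact congrArg List.ofFn (funext fun s => Fin.append_right _ _ s)
  rw [lexTri_eq_lexTriL, lexTri_eq_lexTriL]
  show lexTriP (List.ofFn x) = lexTriP (List.ofFn (Fin.append (x ∘ i) (x ∘ j)))
  calc lexTriP (List.ofFn x)
      = lexTriP (List.map x (List.finRange (d + m))) := by rw [List.ofFn_eq_map]
    _ = lexTriP (List.map x (front i d ++ rest i d)) :=
        sort_aux x hi hind hmin d (le_refl d)
    _ = lexTriP (List.ofFn (Fin.append (x ∘ i) (x ∘ j))) := by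
        rw [hfrontd, hrestd, happ]
        apply congrArg lexTriP
        rw [List.map_append, List.map_ofFn, List.map_ofFn]
end

section
/- Let σ ⊆ ℝ^d be a full-dimensional simplicial cone with integral generators v_1,...,v_d and let deg: ℤ^d → ℤ be a grading positive on σ \ {0}. With g_i = deg(v_i), E = ℤ^d ∩ par(v_1,...,v_d), and h_j = |{x ∈ E : deg x = j}|, the Hilbert series of σ satisfies Σ_{k≥0} |{x ∈ ℤ^d ∩ σ : deg x = k}| t^k = (h_0 + h_1 t + ... + h_s t^s) / ((1−t^{g_1})···(1−t^{g_d})) as formal power series. -/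
open Finset

set_option maxHeartbeats 1000000

/-- The lattice points of the semi-open parallelotope
`par(v_1,…,v_d) = {q_1v_1 + ⋯ + q_dv_d : 0 ≤ q_i < 1}`. -/
def parPoints {d : ℕ} (v : Fin d → (Fin d → ℤ)) : Set (Fin d → ℤ) :=
  {x | ∃ q : Fin d → ℝ, (∀ i, 0 ≤ q i ∧ q i < 1) ∧
        (fun j => (x j : ℝ)) = ∑ i, q i • (fun j => (v i j : ℝ))}

/-- The (free) monoid `M_σ = ℤ₊v_1 + ⋯ + ℤ₊v_d` generated by `v_1,…,v_d`. -/
def genMonoid {d : ℕ} (v : Fin d → (Fin d → ℤ)) : Set (Fin d → ℤ) :=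
  {m | ∃ c : Fin d → ℕ, m = ∑ i, (c i : ℤ) • v i}

namespace HilbAux

/-- geometric series: (∑ t^{gk}) (1 - t^g) = 1 -/
lemma geom_mul (g : ℕ) (hg : 0 < g) :
    (PowerSeries.mk fun k => if g ∣ k then (1:ℤ) else 0) * (1 - PowerSeries.X ^ g) = 1 := by
  ext k
  rw [mul_sub, mul_one, map_sub, PowerSeries.coeff_mul_X_pow', PowerSeries.coeff_mk,
    PowerSeries.coeff_one]
  rcases Nat.eq_zero_or_pos k with hk | hk
  · subst hk
    rw [if_pos (dvd_zero g), if_neg (by omega), if_pos rfl]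
    ring
  · rw [if_neg hk.ne']
    by_cases h : g ≤ k
    · rw [if_pos h, PowerSeries.coeff_mk]
      have hiff : g ∣ k ↔ g ∣ k - g := by
        constructor
        · intro h'; exact (Nat.dvd_sub h' dvd_rfl)
        · intro h'; have := Nat.dvd_add h' (dvd_refl g)
          rwa [Nat.sub_add_cancel h] at this
      by_cases hd : g ∣ k
      · rw [if_pos hd, if_pos (hiff.mp hd)]; ring
      · rw [if_neg hd, if_neg (fun h' => hd (hiff.mpr h'))]; ring
    · rw [if_neg h, if_neg (fun hd => h (Nat.le_of_dvd hk hd))]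
      ring

variable {d : ℕ} (v : Fin d → (Fin d → ℤ)) (a : Fin d → ℤ)

/-- real version of generators -/
def vR (i : Fin d) : Fin d → ℝ := fun j => (v i j : ℝ)

def degz (z : Fin d → ℤ) : ℤ := ∑ i, a i * z i

def gdeg (i : Fin d) : ℕ := (∑ j, a j * v i j).toNat

def psi (p : (Fin d → ℕ) × (Fin d → ℤ)) : Fin d → ℤ :=
  p.2 + ∑ i, (p.1 i : ℤ) • v i

variable {v a}

section hyps
variable (hv : LinearIndependent ℝ (fun i => (fun j => (v i j : ℝ))))
    (hpos : ∀ y ∈ coneFin (fun i => (fun j => (v i j : ℝ))),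
      y ≠ 0 → 0 < ∑ i, (a i : ℝ) * y i)

include hv in
lemma rep_unique {q q' : Fin d → ℝ}
    (h : ∑ i, q i • vR v i = ∑ i, q' i • vR v i) : q = q' := by
  funext i
  have h0 : ∑ i ∈ univ, (q i - q' i) • vR v i = 0 := by
    simp only [sub_smul, Finset.sum_sub_distrib, h, sub_self]
  have := linearIndependent_iff'.mp hv univ (fun i => q i - q' i) h0 i (mem_univ i)
  linarith
end hyps

lemma g_pos (hv : LinearIndependent ℝ (fun i => (fun j => (v i j : ℝ))))
    (hpos : ∀ y ∈ coneFin (fun i => (fun j => (v i j : ℝ))),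
      y ≠ 0 → 0 < ∑ i, (a i : ℝ) * y i) (i : Fin d) :
    0 < ∑ j, a j * v i j := by
  have hmem : vR v i ∈ coneFin (fun i => (fun j => (v i j : ℝ))) := by
    refine ⟨fun i' => if i' = i then 1 else 0, fun i' => by positivity, ?_⟩
    simp only [ite_smul, one_smul, zero_smul, Finset.sum_ite_eq', mem_univ, if_pos]
    rfl
  have hne : vR v i ≠ 0 := hv.ne_zero i
  have := hpos _ hmem hne
  have hcast : ((∑ j, a j * v i j : ℤ) : ℝ) = ∑ j, (a j : ℝ) * vR v i j := by
    push_cast [vR]; rfl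
  exact_mod_cast hcast ▸ this

lemma gdeg_cast (hv : LinearIndependent ℝ (fun i => (fun j => (v i j : ℝ))))
    (hpos : ∀ y ∈ coneFin (fun i => (fun j => (v i j : ℝ))),
      y ≠ 0 → 0 < ∑ i, (a i : ℝ) * y i) (i : Fin d) :
    (gdeg v a i : ℤ) = ∑ j, a j * v i j :=
  Int.toNat_of_nonneg (g_pos hv hpos i).le

lemma gdeg_pos (hv : LinearIndependent ℝ (fun i => (fun j => (v i j : ℝ))))
    (hpos : ∀ y ∈ coneFin (fun i => (fun j => (v i j : ℝ))),
      y ≠ 0 → 0 < ∑ i, (a i : ℝ) * y i) (i : Fin d) :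
    0 < gdeg v a i := by
  have := g_pos hv hpos i; unfold gdeg; omega

/-- realification of psi -/
lemma psi_cast (c : Fin d → ℕ) (x : Fin d → ℤ) (j : Fin d) :
    ((psi v (c, x) j : ℤ) : ℝ) = (x j : ℝ) + ∑ i, (c i : ℝ) * (v i j : ℝ) := by
  simp only [psi, Pi.add_apply, Finset.sum_apply, Pi.smul_apply, smul_eq_mul]
  push_cast
  ring

lemma psi_deg (c : Fin d → ℕ) (x : Fin d → ℤ) :
    degz a (psi v (c, x)) = (∑ i, (c i : ℤ) * (∑ j, a j * v i j)) + degz a x := by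
  simp only [degz, psi, Pi.add_apply, Finset.sum_apply, Pi.smul_apply, smul_eq_mul,
    mul_add, Finset.sum_add_distrib, Finset.mul_sum]
  rw [add_comm]
  congr 1
  rw [Finset.sum_comm]
  congr 1; funext i; congr 1; funext j; ring


/-- membership of psi in the cone -/
lemma psi_mem_cone {c : Fin d → ℕ} {x : Fin d → ℤ} (hx : x ∈ parPoints v) :
    (fun j => ((psi v (c, x)) j : ℝ)) ∈ coneFin (fun i => (fun j => (v i j : ℝ))) := by
  obtain ⟨q, hq, hxq⟩ := hx
  refine ⟨fun i => q i + c i, fun i => by have := (hq i).1; positivity, ?_⟩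
  funext j
  have hx' : (x j : ℝ) = ∑ i, q i * (v i j : ℝ) := by
    have := congrFun hxq j
    simpa [Finset.sum_apply] using this
  simp only [psi_cast, Finset.sum_apply, Pi.smul_apply, smul_eq_mul, hx',
    ← Finset.sum_add_distrib]
  congr 1; funext i; ring

/-- injectivity of psi on pairs with parallelotope component -/
lemma psi_inj (hv : LinearIndependent ℝ (fun i => (fun j => (v i j : ℝ))))
    {p p' : (Fin d → ℕ) × (Fin d → ℤ)}
    (hp : p.2 ∈ parPoints v) (hp' : p'.2 ∈ parPoints v)
    (h : psi v p = psi v p') : p = p' := by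
  obtain ⟨c, x⟩ := p
  obtain ⟨c', x'⟩ := p'
  obtain ⟨q, hq, hxq⟩ := hp
  obtain ⟨q', hq', hxq'⟩ := hp'
  have hre : ∀ j, (∑ i, (q i + c i) • vR v i) j = (∑ i, (q' i + c' i) • vR v i) j := by
    intro j
    have h1 := congrFun hxq j
    have h2 := congrFun hxq' j
    have h3 : ((psi v (c, x)) j : ℝ) = ((psi v (c', x')) j : ℝ) := by rw [h]
    rw [psi_cast, psi_cast] at h3
    simp only [Finset.sum_apply, Pi.smul_apply, smul_eq_mul, vR] at h1 h2 ⊢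
    rw [h1] at h3; rw [h2] at h3
    calc ∑ i, (q i + c i) * (v i j : ℝ) = ∑ i, q i * (v i j : ℝ) + ∑ i, (c i : ℝ) * (v i j:ℝ) := by
          rw [← Finset.sum_add_distrib]; congr 1; funext i; ring
      _ = ∑ i, q' i * (v i j : ℝ) + ∑ i, (c' i : ℝ) * (v i j:ℝ) := h3
      _ = ∑ i, (q' i + c' i) * (v i j : ℝ) := by
          rw [← Finset.sum_add_distrib]; congr 1; funext i; ring
  have heq := rep_unique hv (q := fun i => q i + c i) (q' := fun i => q' i + c' i)
    (funext hre)
  have hc : c = c' := by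
    funext i
    have h1 : q i + (c i : ℝ) = q' i + (c' i : ℝ) := congrFun heq i
    have hf1 : ⌊q i + (c i : ℝ)⌋ = (c i : ℤ) := by
      rw [Int.floor_eq_iff]
      constructor
      · push_cast; linarith [(hq i).1]
      · push_cast; linarith [(hq i).2]
    have hf2 : ⌊q' i + (c' i : ℝ)⌋ = (c' i : ℤ) := by
      rw [Int.floor_eq_iff]
      constructor
      · push_cast; linarith [(hq' i).1]
      · push_cast; linarith [(hq' i).2]
    have : (c i : ℤ) = (c' i : ℤ) := by rw [← hf1, ← hf2, h1]
    exact_mod_cast this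
  subst hc
  have hx : x = x' := by
    have := h
    simp only [psi] at this
    exact add_right_cancel this
  rw [hx]

/-- decomposition of a lattice point of the cone -/
lemma decomp (hv : LinearIndependent ℝ (fun i => (fun j => (v i j : ℝ)))) {z : Fin d → ℤ}
    (hz : (fun j => (z j : ℝ)) ∈ coneFin (fun i => (fun j => (v i j : ℝ)))) :
    ∃ c x, x ∈ parPoints v ∧ z = psi v (c, x) := by
  obtain ⟨q, hq, hzq⟩ := hz
  refine ⟨fun i => (⌊q i⌋).toNat, z - ∑ i, ((⌊q i⌋).toNat : ℤ) • v i, ?_, by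
    simp [psi]⟩
  refine ⟨fun i => Int.fract (q i), fun i => ⟨Int.fract_nonneg _, Int.fract_lt_one _⟩, ?_⟩
  funext j
  have hz' : (z j : ℝ) = ∑ i, q i * (v i j : ℝ) := by
    have := congrFun hzq j
    simpa [Finset.sum_apply] using this
  have hfl : ∀ i, (((⌊q i⌋).toNat : ℕ) : ℝ) = (⌊q i⌋ : ℝ) := by
    intro i
    rw [← Int.cast_natCast, Int.toNat_of_nonneg (Int.floor_nonneg.mpr (hq i))]
  simp only [Pi.sub_apply, Finset.sum_apply, Pi.smul_apply, smul_eq_mul]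
  push_cast
  rw [hz']
  rw [← Finset.sum_sub_distrib]
  congr 1; funext i
  rw [Int.fract]
  push_cast
  rw [hfl i]
  ring

/-- finiteness of the parallelotope lattice points -/
lemma par_finite : (parPoints v).Finite := by
  have : parPoints v ⊆ Set.pi Set.univ
      (fun j => Set.Icc (-(∑ i, |v i j|)) (∑ i, |v i j|)) := by
    rintro x ⟨q, hq, hxq⟩ j _
    have hx' : (x j : ℝ) = ∑ i, q i * (v i j : ℝ) := by
      have := congrFun hxq j
      simpa [Finset.sum_apply] using this
    have habs : |(x j : ℝ)| ≤ ∑ i, |(v i j : ℝ)| := by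
      rw [hx']
      refine (Finset.abs_sum_le_sum_abs _ _).trans ?_
      refine Finset.sum_le_sum fun i _ => ?_
      rw [abs_mul]
      have h1 : |q i| ≤ 1 := by
        rw [abs_of_nonneg (hq i).1]; exact (hq i).2.le
      calc |q i| * |(v i j : ℝ)| ≤ 1 * |(v i j : ℝ)| :=
            mul_le_mul_of_nonneg_right h1 (abs_nonneg _)
        _ = |(v i j : ℝ)| := one_mul _
    have : |x j| ≤ ∑ i, |v i j| := by
      have : |(x j : ℝ)| ≤ ((∑ i, |v i j| : ℤ) : ℝ) := by push_cast; exact habs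
      exact_mod_cast (abs_le.mp this) |>.2 |> fun h2 => abs_le.mpr
        ⟨by exact_mod_cast (abs_le.mp this).1, h2⟩
    exact Set.mem_Icc.mpr (abs_le.mp this)
  exact Set.Finite.subset (Set.Finite.pi (fun j => Set.finite_Icc _ _)) this

/-- finiteness of the coefficient sets -/
lemma c_finite (hg : ∀ i, 0 < gdeg v a i) (m : ℕ) :
    {c : Fin d → ℕ | ∑ i, c i * gdeg v a i = m}.Finite := by
  have : {c : Fin d → ℕ | ∑ i, c i * gdeg v a i = m} ⊆
      Set.pi Set.univ (fun _ => Set.Iic m) := by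
    intro c hc j _
    simp only [Set.mem_setOf_eq] at hc
    have h1 : c j ≤ c j * gdeg v a j := Nat.le_mul_of_pos_right _ (hg j)
    have h2 : c j * gdeg v a j ≤ m := hc ▸ Finset.single_le_sum
      (f := fun i => c i * gdeg v a i) (fun i _ => Nat.zero_le _) (mem_univ j)
    exact Set.mem_Iic.mpr (h1.trans h2)
  exact Set.Finite.subset (Set.Finite.pi (fun j => Set.finite_Iic _)) this


lemma count_prod (hg : ∀ i, 0 < gdeg v a i) (m : ℕ) :
    (({c : Fin d → ℕ | ∑ i, c i * gdeg v a i = m}).ncard : ℤ) =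
    PowerSeries.coeff m (∏ i : Fin d,
      PowerSeries.mk fun k => if gdeg v a i ∣ k then (1:ℤ) else 0) := by
  classical
  rw [PowerSeries.coeff_prod]
  simp only [PowerSeries.coeff_mk]
  have h2 : (∑ l ∈ univ.finsuppAntidiag m, ∏ i ∈ univ, if gdeg v a i ∣ l i then (1:ℤ) else 0)
      = (((univ.finsuppAntidiag m).filter
          (fun l => ∀ i ∈ univ, gdeg v a i ∣ l i)).card : ℤ) := by
    simp only [Finset.prod_boole]
    convert Finset.sum_boole (R := ℤ)
      (p := fun l : Fin d →₀ ℕ => ∀ i ∈ univ, gdeg v a i ∣ l i)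
      (s := univ.finsuppAntidiag m) using 2
    rename_i l _
    by_cases h : ∀ i ∈ univ, gdeg v a i ∣ l i <;> simp [h]
  rw [h2]
  rw [Set.ncard_eq_toFinset_card _ (c_finite hg m)]
  congr 1
  refine Finset.card_bij'
    (fun c _ => Finsupp.equivFunOnFinite.symm (fun i => c i * gdeg v a i))
    (fun l _ => fun i => l i / gdeg v a i) ?_ ?_ ?_ ?_
  · intro c hc
    rw [Set.Finite.mem_toFinset, Set.mem_setOf_eq] at hc
    rw [Finset.mem_filter]
    constructor
    · rw [mem_finsuppAntidiag]
      refine ⟨?_, Finset.subset_univ _⟩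
      have heq : univ.sum ⇑(Finsupp.equivFunOnFinite.symm fun i => c i * gdeg v a i)
          = ∑ i, c i * gdeg v a i :=
        Finset.sum_congr rfl fun i _ => by
          simp [Finsupp.coe_equivFunOnFinite_symm]
      exact heq.trans hc
    · intro i _
      simp [Finsupp.coe_equivFunOnFinite_symm]
  · intro l hl
    rw [Finset.mem_filter, mem_finsuppAntidiag] at hl
    rw [Set.Finite.mem_toFinset, Set.mem_setOf_eq]
    have heq : (∑ i, l i / gdeg v a i * gdeg v a i) = univ.sum ⇑l :=
      Finset.sum_congr rfl fun i _ =>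
        Nat.div_mul_cancel (hl.2 i (mem_univ i))
    exact heq.trans hl.1.1
  · intro c hc
    funext i
    simp only [Finsupp.coe_equivFunOnFinite_symm]
    exact Nat.mul_div_cancel _ (hg i)
  · intro l hl'
    rw [Finset.mem_filter] at hl'
    show Finsupp.equivFunOnFinite.symm (fun i => (l i / gdeg v a i) * gdeg v a i) = l
    have heq : (fun i => l i / gdeg v a i * gdeg v a i) = fun i => l i :=
      funext fun i => Nat.div_mul_cancel (hl'.2 i (mem_univ i))
    rw [heq]
    exact Finsupp.equivFunOnFinite_symm_coe l

lemma par_deg_nonneg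
    (hpos : ∀ y ∈ coneFin (fun i => (fun j => (v i j : ℝ))),
      y ≠ 0 → 0 < ∑ i, (a i : ℝ) * y i)
    {x : Fin d → ℤ} (hx : x ∈ parPoints v) : 0 ≤ degz a x := by
  obtain ⟨q, hq, hxq⟩ := hx
  have hc : (fun j => (x j : ℝ)) ∈ coneFin (fun i => (fun j => (v i j : ℝ))) :=
    ⟨q, fun i => (hq i).1, hxq⟩
  have hcast : ((degz a x : ℤ) : ℝ) = ∑ i, (a i : ℝ) * (x i : ℝ) := by
    unfold degz; push_cast; rfl
  by_cases h0 : (fun j => (x j : ℝ)) = (0 : Fin d → ℝ)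
  · have : ∀ j, x j = 0 := fun j => by
      have h : (x j : ℝ) = 0 := by simpa using congrFun h0 j
      exact_mod_cast h
    have : degz a x = 0 := by unfold degz; simp [this]
    omega
  · have := (hpos _ hc h0).le
    rw [← hcast] at this
    exact_mod_cast this

lemma main_count
    (hv : LinearIndependent ℝ (fun i => (fun j => (v i j : ℝ))))
    (hpos : ∀ y ∈ coneFin (fun i => (fun j => (v i j : ℝ))),
      y ≠ 0 → 0 < ∑ i, (a i : ℝ) * y i) (k : ℕ) :
    ({z : Fin d → ℤ |
        (fun j => (z j : ℝ)) ∈ coneFin (fun i => (fun j => (v i j : ℝ))) ∧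
        ∑ i, a i * z i = (k : ℤ)}).ncard =
    ∑ p ∈ antidiagonal k,
      ({x ∈ parPoints v | ∑ i, a i * x i = (p.1 : ℤ)}).ncard *
      ({c : Fin d → ℕ | ∑ i, c i * gdeg v a i = p.2}).ncard := by
  classical
  have hg := gdeg_pos hv hpos
  have hEj : ∀ j : ℕ, ({x ∈ parPoints v | ∑ i, a i * x i = (j:ℤ)}).Finite :=
    fun j => (par_finite (v := v)).subset (fun x hx => hx.1)
  have hCm := c_finite (v := v) (a := a) hg
  set efin : ℕ → Finset (Fin d → ℤ) := fun j => (hEj j).toFinset with hefin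
  set cfin : ℕ → Finset (Fin d → ℕ) := fun m => (hCm m).toFinset with hcfin
  set T : Finset ((Fin d → ℕ) × (Fin d → ℤ)) :=
    (antidiagonal k).biUnion (fun p => (cfin p.2) ×ˢ (efin p.1)) with hT
  -- pairs in T have parallelotope component and correct degrees
  have hTmem : ∀ p ∈ T, p.2 ∈ parPoints v := by
    rintro ⟨c, x⟩ hp
    obtain ⟨q, _, hq⟩ := Finset.mem_biUnion.mp hp
    have := (Finset.mem_product.mp hq).2
    rw [hefin, Set.Finite.mem_toFinset] at this
    exact this.1
  -- set equality
  have hset : {z : Fin d → ℤ |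
        (fun j => (z j : ℝ)) ∈ coneFin (fun i => (fun j => (v i j : ℝ))) ∧
        ∑ i, a i * z i = (k : ℤ)} = ↑(T.image (psi v)) := by
    ext z
    simp only [Set.mem_setOf_eq, Finset.coe_image, Set.mem_image, Finset.mem_coe]
    constructor
    · rintro ⟨hzc, hzd⟩
      obtain ⟨c, x, hxpar, rfl⟩ := decomp hv hzc
      have hdx := par_deg_nonneg hpos hxpar
      set m : ℕ := ∑ i, c i * gdeg v a i with hm
      have hdeg : degz a (psi v (c, x)) = (m : ℤ) + degz a x := by
        rw [psi_deg]
        congr 1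
        rw [hm]
        push_cast
        exact Finset.sum_congr rfl fun i _ => by
          rw [gdeg_cast hv hpos i]
      have hzd' : degz a (psi v (c, x)) = (k : ℤ) := hzd
      set j : ℕ := (degz a x).toNat with hj
      have hjx : (j : ℤ) = degz a x := Int.toNat_of_nonneg hdx
      have hjm : j + m = k := by omega
      refine ⟨(c, x), ?_, rfl⟩
      rw [hT]
      refine Finset.mem_biUnion.mpr ⟨(j, m), ?_, ?_⟩
      · rw [Finset.HasAntidiagonal.mem_antidiagonal]; exact hjm
      · rw [Finset.mem_product]
        constructor
        · rw [hcfin, Set.Finite.mem_toFinset]; exact hm.symm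
        · rw [hefin, Set.Finite.mem_toFinset]
          exact ⟨hxpar, hjx.symm⟩
    · rintro ⟨⟨c, x⟩, hcx, rfl⟩
      obtain ⟨p, hpk, hq⟩ := Finset.mem_biUnion.mp hcx
      obtain ⟨hc, hx⟩ := Finset.mem_product.mp hq
      rw [hcfin, Set.Finite.mem_toFinset, Set.mem_setOf_eq] at hc
      rw [hefin, Set.Finite.mem_toFinset] at hx
      refine ⟨psi_mem_cone hx.1, ?_⟩
      have hdeg : degz a (psi v (c, x)) = (p.2 : ℤ) + (p.1 : ℤ) := by
        rw [psi_deg]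
        congr 1
        · rw [← hc]
          push_cast
          exact Finset.sum_congr rfl fun i _ => by rw [gdeg_cast hv hpos i]
        · exact hx.2
      have hpk' := Finset.HasAntidiagonal.mem_antidiagonal.mp hpk
      have : degz a (psi v (c, x)) = (k : ℤ) := by
        rw [hdeg]; push_cast; omega
      exact this
  rw [hset, Set.ncard_coe_finset]
  rw [Finset.card_image_of_injOn (fun p hp p' hp' h =>
    psi_inj hv (hTmem p hp) (hTmem p' hp') h)]
  rw [hT, Finset.card_biUnion]
  · refine Finset.sum_congr rfl fun p hp => ?_
    rw [Finset.card_product]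
    rw [hcfin, hefin, Set.ncard_eq_toFinset_card _ (hCm p.2),
      Set.ncard_eq_toFinset_card _ (hEj p.1)]
    ring
  · rintro p hp p' hp' hne
    rw [Function.onFun, Finset.disjoint_left]
    rintro ⟨c, x⟩ hq hq'
    obtain ⟨hc, hx⟩ := Finset.mem_product.mp hq
    obtain ⟨hc', hx'⟩ := Finset.mem_product.mp hq'
    rw [hcfin, Set.Finite.mem_toFinset, Set.mem_setOf_eq] at hc hc'
    rw [hefin, Set.Finite.mem_toFinset] at hx hx'
    have h1 : p.1 = p'.1 := by
      have := hx.2.symm.trans hx'.2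
      exact_mod_cast this
    have h2 : p.2 = p'.2 := hc.symm.trans hc'
    exact hne (Prod.ext h1 h2)

end HilbAux

/-- Let `σ ⊆ ℝ^d` be a full-dimensional simplicial cone with
integral generators `v_1,…,v_d` and let `deg : ℤ^d → ℤ`, `deg z = ∑ aᵢzᵢ`, be
a grading positive on `σ \ {0}`. With `g_i = deg v_i`,
`E = ℤ^d ∩ par(v_1,…,v_d)` and `h_j = |{x ∈ E : deg x = j}|`, the Hilbert
series of `σ` satisfies
`(∑_k |{x ∈ ℤ^d ∩ σ : deg x = k}| t^k) ⬝ ∏ᵢ(1 − t^{gᵢ}) = ∑_j h_j t^j`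
as formal power series. -/
theorem hilbert_series_of_simplicial_cone {d : ℕ}
    (v : Fin d → (Fin d → ℤ))
    (hv : LinearIndependent ℝ (fun i => (fun j => (v i j : ℝ))))
    (a : Fin d → ℤ)
    (hpos : ∀ y ∈ coneFin (fun i => (fun j => (v i j : ℝ))),
      y ≠ 0 → 0 < ∑ i, (a i : ℝ) * y i) :
    (PowerSeries.mk fun k =>
        (({z : Fin d → ℤ |
            (fun j => (z j : ℝ)) ∈ coneFin (fun i => (fun j => (v i j : ℝ))) ∧
            ∑ i, a i * z i = (k : ℤ)}).ncard : ℤ)) *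
      ∏ i : Fin d, (1 - (PowerSeries.X : PowerSeries ℤ) ^ (∑ j, a j * v i j).toNat) =
    PowerSeries.mk fun k =>
      (({x ∈ parPoints v | ∑ i, a i * x i = (k : ℤ)}).ncard : ℤ) := by
  classical
  have hg := HilbAux.gdeg_pos hv hpos
  have hmul : (PowerSeries.mk fun k =>
        (({z : Fin d → ℤ |
            (fun j => (z j : ℝ)) ∈ coneFin (fun i => (fun j => (v i j : ℝ))) ∧
            ∑ i, a i * z i = (k : ℤ)}).ncard : ℤ)) =
      (PowerSeries.mk fun k =>
        (({x ∈ parPoints v | ∑ i, a i * x i = (k : ℤ)}).ncard : ℤ)) *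
      (PowerSeries.mk fun m =>
        (({c : Fin d → ℕ | ∑ i, c i * HilbAux.gdeg v a i = m}).ncard : ℤ)) := by
    ext k
    rw [PowerSeries.coeff_mk, PowerSeries.coeff_mul]
    simp only [PowerSeries.coeff_mk]
    rw [HilbAux.main_count hv hpos k]
    push_cast
    rfl
  have hC : (PowerSeries.mk fun m =>
        (({c : Fin d → ℕ | ∑ i, c i * HilbAux.gdeg v a i = m}).ncard : ℤ)) =
      ∏ i : Fin d, PowerSeries.mk fun k =>
        if HilbAux.gdeg v a i ∣ k then (1:ℤ) else 0 := by
    ext m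
    rw [PowerSeries.coeff_mk]
    exact HilbAux.count_prod hg m
  have hexp : (∏ i : Fin d, (1 - (PowerSeries.X : PowerSeries ℤ) ^ (∑ j, a j * v i j).toNat))
      = ∏ i : Fin d, (1 - (PowerSeries.X : PowerSeries ℤ) ^ HilbAux.gdeg v a i) := rfl
  rw [hmul, hexp, mul_assoc, hC, ← Finset.prod_mul_distrib]
  rw [Finset.prod_congr rfl fun i _ => HilbAux.geom_mul _ (hg i)]
  rw [Finset.prod_const_one, mul_one]
end

section
/- Let σ ⊆ ℝ^d be a full-dimensional simplicial cone with integral generators v_1,...,v_d, deg a grading positive on σ \ {0} with g_i = deg(v_i), and S a union of facets of σ. For x ∈ E = ℤ^d ∩ par(v_1,...,v_d) with x = Σ q_i v_i, define ε(x) as the sum of all v_i such that q_i = 0 and the facet of σ opposite v_i belongs to S. Then the Hilbert series of the semi-open cone σ \ S is H_{σ∖S}(t) = (Σ_{x∈E} t^{deg ε(x) + deg x}) / ((1−t^{g_1})···(1−t^{g_d})). -/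
open Finset

open PowerSeries in
private lemma aux_conv {α β : Type*} (A : Set α) (B : Set β) (f : α → ℤ) (g : β → ℤ)
    (hA : ∀ k : ℕ, {x | x ∈ A ∧ f x = (k:ℤ)}.Finite)
    (hB : ∀ k : ℕ, {y | y ∈ B ∧ g y = (k:ℤ)}.Finite)
    (hA0 : ∀ x ∈ A, 0 ≤ f x) (hB0 : ∀ y ∈ B, 0 ≤ g y) :
    (PowerSeries.mk fun k => ({x | x ∈ A ∧ f x = (k:ℤ)}.ncard : ℤ)) *
      (PowerSeries.mk fun k => ({y | y ∈ B ∧ g y = (k:ℤ)}.ncard : ℤ)) =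
    PowerSeries.mk fun k =>
      (({p : α × β | (p.1 ∈ A ∧ p.2 ∈ B) ∧ f p.1 + g p.2 = (k:ℤ)}).ncard : ℤ) := by
  classical
  ext k
  rw [coeff_mul, coeff_mk]
  have hset : {p : α × β | (p.1 ∈ A ∧ p.2 ∈ B) ∧ f p.1 + g p.2 = (k:ℤ)} =
      ↑((antidiagonal k).biUnion fun ij => (hA ij.1).toFinset ×ˢ (hB ij.2).toFinset) := by
    ext p
    simp only [Set.mem_setOf_eq, coe_biUnion, Set.mem_iUnion, mem_coe, mem_product,
      Set.Finite.mem_toFinset, Set.mem_setOf_eq, Finset.HasAntidiagonal.mem_antidiagonal]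
    constructor
    · rintro ⟨⟨h1, h2⟩, hsum⟩
      refine ⟨((f p.1).toNat, (g p.2).toNat), ?_, ⟨h1, ?_⟩, ⟨h2, ?_⟩⟩
      · have e1 : ((f p.1).toNat : ℤ) = f p.1 := Int.toNat_of_nonneg (hA0 _ h1)
        have e2 : ((g p.2).toNat : ℤ) = g p.2 := Int.toNat_of_nonneg (hB0 _ h2)
        omega
      · exact (Int.toNat_of_nonneg (hA0 _ h1)).symm
      · exact (Int.toNat_of_nonneg (hB0 _ h2)).symm
    · rintro ⟨⟨i, j⟩, hij, ⟨h1, e1⟩, ⟨h2, e2⟩⟩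
      exact ⟨⟨h1, h2⟩, by rw [e1, e2]; exact_mod_cast congrArg (Nat.cast : ℕ → ℤ) hij⟩
  rw [hset, Set.ncard_coe_finset, Finset.card_biUnion]
  · push_cast
    refine Finset.sum_congr rfl fun ij _ => ?_
    rw [coeff_mk, coeff_mk, Finset.card_product,
      Set.ncard_eq_toFinset_card _ (hA ij.1), Set.ncard_eq_toFinset_card _ (hB ij.2)]
    push_cast
    ring
  · intro x hx y hy hxy
    rw [Function.onFun, Finset.disjoint_left]
    rintro p hp hq
    simp only [mem_product, Set.Finite.mem_toFinset, Set.mem_setOf_eq] at hp hq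
    apply hxy
    have : (x.1 : ℤ) = y.1 := by rw [← hp.1.2, ← hq.1.2]
    have h1 : x.1 = y.1 := by exact_mod_cast this
    rw [Finset.mem_coe, Finset.HasAntidiagonal.mem_antidiagonal] at hx hy
    ext <;> omega

open PowerSeries in
private lemma aux_unit (n : ℕ) (hn : 0 < n) :
    (PowerSeries.mk fun k => if n ∣ k then (1:ℤ) else 0) * (1 - X ^ n) = 1 := by
  ext k
  simp only [mul_sub, mul_one, map_sub, coeff_mul_X_pow', coeff_mk, coeff_one]
  by_cases h : n ≤ k
  · rw [if_pos h]
    have hk : k ≠ 0 := by omega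
    by_cases hd : n ∣ k
    · have h2 : n ∣ k - n := Nat.dvd_sub hd dvd_rfl
      simp [hd, h2, hk]
    · have h2 : ¬ n ∣ k - n := fun h2 => hd (by
        have := Nat.dvd_add h2 (dvd_refl n)
        rwa [Nat.sub_add_cancel h] at this)
      simp [hd, h2, hk]
  · rw [if_neg h]
    rcases Nat.eq_zero_or_pos k with rfl | hk
    · simp
    · have hd : ¬ n ∣ k := fun hd => absurd (Nat.le_of_dvd hk hd) h
      simp [hd, hk.ne']

open PowerSeries in
private lemma aux_single (n : ℕ) (hn : 0 < n) :
    (PowerSeries.mk fun k => (({m : ℕ | (m:ℤ) * n = (k:ℤ)}).ncard : ℤ)) =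
    PowerSeries.mk fun k => if n ∣ k then (1:ℤ) else 0 := by
  ext k
  rw [coeff_mk, coeff_mk]
  by_cases hd : n ∣ k
  · obtain ⟨c, rfl⟩ := hd
    have : {m : ℕ | (m:ℤ) * n = ((n*c : ℕ):ℤ)} = {c} := by
      ext m
      simp only [Set.mem_singleton_iff, Set.mem_setOf_eq]
      constructor
      · intro h
        have h2 : m * n = n * c := by exact_mod_cast h
        exact Nat.eq_of_mul_eq_mul_right hn (h2.trans (Nat.mul_comm n c))
      · rintro rfl; push_cast; ring
    rw [this, Set.ncard_singleton, if_pos ⟨c, rfl⟩]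
    simp
  · have : {m : ℕ | (m:ℤ) * n = (k:ℤ)} = ∅ := by
      ext m
      simp only [Set.mem_empty_iff_false, iff_false, Set.mem_setOf_eq]
      intro h
      refine hd ⟨m, ?_⟩
      rw [mul_comm] at h
      exact_mod_cast h.symm
    rw [this, Set.ncard_empty, if_neg hd]
    rfl

open PowerSeries in
private lemma aux_prod {ι : Type*} [Fintype ι] [DecidableEq ι] (g : ι → ℕ) (hg : ∀ i, 0 < g i)
    (s : Finset ι) :
    (PowerSeries.mk fun k =>
        (({c : ι → ℕ | (∀ i, i ∉ s → c i = 0) ∧ ∑ i ∈ s, (c i : ℤ) * g i = (k:ℤ)}).ncard : ℤ)) *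
      ∏ i ∈ s, (1 - (X : PowerSeries ℤ) ^ g i) = 1 := by
  classical
  induction s using Finset.induction with
  | empty =>
    rw [Finset.prod_empty, mul_one]
    ext k
    rw [coeff_mk, coeff_one]
    rcases Nat.eq_zero_or_pos k with rfl | hk
    · have : {c : ι → ℕ | (∀ i, i ∉ (∅:Finset ι) → c i = 0) ∧ ∑ i ∈ (∅:Finset ι), (c i : ℤ) * g i = ((0:ℕ):ℤ)}
          = {fun _ => 0} := by
        ext c
        simp [funext_iff]
      rw [this, Set.ncard_singleton]; simp
    · have : {c : ι → ℕ | (∀ i, i ∉ (∅:Finset ι) → c i = 0) ∧ ∑ i ∈ (∅:Finset ι), (c i : ℤ) * g i = (k:ℤ)}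
          = ∅ := by
        ext c; simp; omega
      rw [this, Set.ncard_empty]; simp [hk.ne']
  | @insert a s ha ih =>
    have hconv := aux_conv (Set.univ : Set ℕ)
      {c : ι → ℕ | ∀ i, i ∉ s → c i = 0}
      (fun m => (m:ℤ) * g a)
      (fun c => ∑ i ∈ s, (c i : ℤ) * g i)
      (fun k => by
        apply Set.Finite.subset (Set.finite_Iic k)
        rintro m ⟨-, hm⟩
        simp only [Set.mem_Iic]
        have h1 : (1:ℤ) ≤ g a := by exact_mod_cast hg a
        have h2 : ((m:ℤ)) * g a = (k:ℤ) := hm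
        have h3 : (m:ℤ) ≤ (m:ℤ) * (g a:ℤ) := le_mul_of_one_le_right (by positivity) h1
        exact_mod_cast h3.trans_eq h2)
      (fun k => by
        apply Set.Finite.subset (Set.Finite.pi (fun i : ι => Set.finite_Iic k))
        rintro c ⟨h0, hsum⟩
        have hsum' : ∑ j ∈ s, (c j : ℤ) * g j = (k:ℤ) := hsum
        clear hsum
        intro i _
        simp only [Set.mem_Iic]
        by_cases his : i ∈ s
        · have h1 : ((c i : ℤ)) * g i ≤ ∑ j ∈ s, (c j : ℤ) * g j := by
            apply Finset.single_le_sum (f := fun j => ((c j : ℤ)) * g j) _ his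
            intro j _; positivity
          have hgi : (1:ℤ) ≤ g i := by exact_mod_cast hg i
          have h2 : (c i : ℤ) ≤ (c i : ℤ) * g i :=
            le_mul_of_one_le_right (by positivity) hgi
          have h4 : (c i : ℤ) ≤ (k:ℤ) := by
            omega
          exact_mod_cast h4
        · rw [h0 i his]; omega)
      (fun m _ => by positivity)
      (fun c _ => by positivity)
    simp only [Set.mem_setOf_eq, Set.mem_univ, true_and] at hconv
    have hbij : ∀ k : ℕ,
        ({p : ℕ × (ι → ℕ) | (∀ i, i ∉ s → p.2 i = 0) ∧
            (p.1:ℤ) * g a + ∑ i ∈ s, (p.2 i : ℤ) * g i = (k:ℤ)}).ncard =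
        ({c : ι → ℕ | (∀ i, i ∉ insert a s → c i = 0) ∧
            ∑ i ∈ insert a s, (c i : ℤ) * g i = (k:ℤ)}).ncard := by
      intro k
      have himg : (fun p : ℕ × (ι → ℕ) => Function.update p.2 a p.1) ''
          {p : ℕ × (ι → ℕ) | (∀ i, i ∉ s → p.2 i = 0) ∧
            (p.1:ℤ) * g a + ∑ i ∈ s, (p.2 i : ℤ) * g i = (k:ℤ)} =
          {c : ι → ℕ | (∀ i, i ∉ insert a s → c i = 0) ∧
            ∑ i ∈ insert a s, (c i : ℤ) * g i = (k:ℤ)} := by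
        ext z
        simp only [Set.mem_image, Set.mem_setOf_eq, Prod.exists]
        constructor
        · rintro ⟨m, c, ⟨hc0, hsum⟩, rfl⟩
          have hsum2 : ∑ i ∈ s, ((Function.update c a m i : ℤ)) * g i
              = ∑ i ∈ s, (c i : ℤ) * g i :=
            Finset.sum_congr rfl (fun i hi => by
              rw [Function.update_of_ne (ne_of_mem_of_not_mem hi ha)])
          constructor
          · intro i hi
            rw [Finset.mem_insert, not_or] at hi
            rw [Function.update_of_ne hi.1]
            exact hc0 i hi.2
          · rw [Finset.sum_insert ha, Function.update_self, hsum2]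
            exact hsum
        · rintro ⟨hz0, hzsum⟩
          have hsum2 : ∑ i ∈ s, ((Function.update z a 0 i : ℤ)) * g i
              = ∑ i ∈ s, (z i : ℤ) * g i :=
            Finset.sum_congr rfl (fun i hi => by
              rw [Function.update_of_ne (ne_of_mem_of_not_mem hi ha)])
          rw [Finset.sum_insert ha] at hzsum
          refine ⟨z a, Function.update z a 0, ⟨?_, ?_⟩, ?_⟩
          · intro i hi
            by_cases hia : i = a
            · subst hia; simp
            · rw [Function.update_of_ne hia]
              exact hz0 i (by simp [hia, hi])
          · rw [hsum2]; exact hzsum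
          · rw [Function.update_idem, Function.update_eq_self]
      rw [← himg, Set.ncard_image_of_injOn]
      rintro ⟨m, c⟩ ⟨hc, -⟩ ⟨m', c'⟩ ⟨hc', -⟩ h
      simp only at h hc hc'
      have hm : m = m' := by
        have := congrFun h a
        simpa using this
      have hcc : c = c' := by
        funext i
        by_cases hia : i = a
        · rw [hia, hc a ha, hc' a ha]
        · have := congrFun h i
          simpa [Function.update_of_ne hia] using this
      rw [Prod.mk.injEq]
      exact ⟨hm, hcc⟩
    have hnew : (PowerSeries.mk fun k =>
        (({c : ι → ℕ | (∀ i, i ∉ insert a s → c i = 0) ∧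
            ∑ i ∈ insert a s, (c i : ℤ) * g i = (k:ℤ)}).ncard : ℤ)) =
        (PowerSeries.mk fun k => if g a ∣ k then (1:ℤ) else 0) *
        (PowerSeries.mk fun k =>
          (({c : ι → ℕ | (∀ i, i ∉ s → c i = 0) ∧ ∑ i ∈ s, (c i : ℤ) * g i = (k:ℤ)}).ncard : ℤ)) := by
      rw [← aux_single (g a) (hg a), hconv]
      ext k
      rw [coeff_mk, coeff_mk, hbij k]
    rw [hnew, Finset.prod_insert ha]
    calc (PowerSeries.mk fun k => if g a ∣ k then (1:ℤ) else 0) *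
          (PowerSeries.mk fun k =>
            (({c : ι → ℕ | (∀ i, i ∉ s → c i = 0) ∧ ∑ i ∈ s, (c i : ℤ) * g i = (k:ℤ)}).ncard : ℤ)) *
          ((1 - X ^ g a) * ∏ i ∈ s, (1 - X ^ g i))
        = ((PowerSeries.mk fun k => if g a ∣ k then (1:ℤ) else 0) * (1 - X ^ g a)) *
          ((PowerSeries.mk fun k =>
            (({c : ι → ℕ | (∀ i, i ∉ s → c i = 0) ∧ ∑ i ∈ s, (c i : ℤ) * g i = (k:ℤ)}).ncard : ℤ)) *
            ∏ i ∈ s, (1 - X ^ g i)) := by ring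
      _ = 1 := by rw [aux_unit (g a) (hg a), ih, mul_one]

open Classical in
/-- Let `σ ⊆ ℝ^d` be a full-dimensional simplicial cone with
integral generators `v_1,…,v_d`, `deg` a grading positive on `σ \ {0}` with
`g_i = deg v_i`, and `S` a union of facets of `σ` (those opposite `v_i` for
`i ∈ K`). For `x ∈ E = ℤ^d ∩ par(v_1,…,v_d)` with `x = ∑ qᵢvᵢ`, let `ε(x)` be
the sum of all `v_i` such that `q_i = 0` and the facet opposite `v_i` belongs
to `S`. Then the Hilbert series of the semi-open cone `σ \ S` is
`H_{σ∖S}(t) = (∑_{x∈E} t^{deg ε(x) + deg x}) / ∏ᵢ(1 − t^{gᵢ})`. -/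
theorem hilbert_series_of_semiopen_simplicial_cone {d : ℕ}
    (v : Fin d → (Fin d → ℤ))
    (hv : LinearIndependent ℝ (fun i => (fun j => (v i j : ℝ))))
    (a : Fin d → ℤ)
    (hpos : ∀ y ∈ coneFin (fun i => (fun j => (v i j : ℝ))),
      y ≠ 0 → 0 < ∑ i, (a i : ℝ) * y i)
    (K : Finset (Fin d))
    (S : Set (E d))
    (hS : S = ⋃ i ∈ K, coneOf ((fun i => (fun j => (v i j : ℝ))) '' {j | j ≠ i}))
    (q : (Fin d → ℤ) → (Fin d → ℝ))
    (hq : ∀ x ∈ parPoints v,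
      (fun j => (x j : ℝ)) = ∑ i, q x i • (fun j => (v i j : ℝ)))
    (ε : (Fin d → ℤ) → (Fin d → ℤ))
    (hε : ∀ x, ε x = ∑ i ∈ K.filter (fun i => q x i = 0), v i) :
    (PowerSeries.mk fun k =>
        (({z : Fin d → ℤ |
            (fun j => (z j : ℝ)) ∈
              coneFin (fun i => (fun j => (v i j : ℝ))) \ S ∧
            ∑ i, a i * z i = (k : ℤ)}).ncard : ℤ)) *
      ∏ i : Fin d, (1 - (PowerSeries.X : PowerSeries ℤ) ^ (∑ j, a j * v i j).toNat) =
    PowerSeries.mk fun k =>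
      (({x ∈ parPoints v | ∑ i, a i * (ε x i + x i) = (k : ℤ)}).ncard : ℤ) := by
  classical
  set w : Fin d → E d := fun i => (fun j => (v i j : ℝ)) with hw
  -- basis
  have hcard : Fintype.card (Fin d) = Module.finrank ℝ (E d) := by
    simp [Module.finrank_fintype_fun_eq_card]
  set B : Module.Basis (Fin d) ℝ (E d) :=
    Module.Basis.mk hv (hv.span_eq_top_of_card_eq_finrank' hcard).ge with hBdef
  have hB : ∀ i, B i = w i := fun i => by rw [hBdef, Module.Basis.coe_mk]
  have hrepr : ∀ c : Fin d → ℝ, ⇑(B.repr (∑ i, c i • w i)) = c := by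
    intro c
    have : (∑ i, c i • w i) = ∑ i, c i • B i := by
      refine Finset.sum_congr rfl fun i _ => by rw [hB i]
    rw [this]
    exact B.repr_sum_self c
  have hsumrepr : ∀ y : E d, ∑ i, B.repr y i • w i = y := by
    intro y
    have := B.sum_repr y
    refine Eq.trans ?_ this
    exact Finset.sum_congr rfl fun i _ => by rw [hB i]
  have hwinj : Function.Injective w := hv.injective
  -- cone characterization
  have hcone : ∀ y : E d, y ∈ coneFin w ↔ ∀ i, 0 ≤ B.repr y i := by
    intro y
    constructor
    · rintro ⟨c, hc, rfl⟩ i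
      rw [hrepr c]
      exact hc i
    · intro h
      exact ⟨fun i => B.repr y i, h, (hsumrepr y).symm⟩
  -- S characterization
  have hSmem : ∀ y : E d, (∀ j, 0 ≤ B.repr y j) → (y ∈ S ↔ ∃ i ∈ K, B.repr y i = 0) := by
    intro y hy
    rw [hS]
    simp only [Set.mem_iUnion]
    constructor
    · rintro ⟨i, hiK, t, c, hts, hc, rfl⟩
      refine ⟨i, hiK, ?_⟩
      have himg : t = (univ.filter (fun j => w j ∈ t)).image w := by
        ext u
        simp only [Finset.mem_image, Finset.mem_filter, Finset.mem_univ, true_and]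
        constructor
        · intro hu
          obtain ⟨j, hj, rfl⟩ := hts hu
          exact ⟨j, hu, rfl⟩
        · rintro ⟨j, hj, rfl⟩; exact hj
      have hsum : (∑ u ∈ t, c u • u)
          = ∑ j, (if w j ∈ t then c (w j) else 0) • w j := by
        conv_lhs => rw [himg]
        rw [Finset.sum_image (fun j _ j' _ h => hwinj h)]
        rw [Finset.sum_filter]
        refine Finset.sum_congr rfl fun j _ => ?_
        by_cases hj : w j ∈ t <;> simp [hj]
      rw [hsum, hrepr]
      have : w i ∉ t := by
        intro hmem
        obtain ⟨j, hj, hji⟩ := hts hmem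
        exact hj (hwinj hji)
      simp [this]
    · rintro ⟨i, hiK, hri⟩
      refine ⟨i, hiK, Finset.image w (univ.erase i),
        Function.extend w (fun j => B.repr y j) 0, ?_, ?_, ?_⟩
      · intro u hu
        rw [Finset.mem_coe, Finset.mem_image] at hu
        obtain ⟨j, hj, rfl⟩ := hu
        exact ⟨j, Finset.ne_of_mem_erase hj, rfl⟩
      · intro u
        rw [Function.extend_def]
        split
        · exact hy _
        · exact le_refl 0
      · rw [Finset.sum_image (fun j _ j' _ h => hwinj h)]
        have : ∀ j ∈ univ.erase i,
            Function.extend w (fun j => B.repr y j) 0 (w j) • w j = B.repr y j • w j := by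
          intro j _
          rw [hwinj.extend_apply]
        rw [Finset.sum_congr rfl this, Finset.sum_erase _ (by rw [hri, zero_smul])]
        exact (hsumrepr y).symm
  -- cast of an integer combination
  have hcastsum : ∀ (c : Fin d → ℤ) (j' : Fin d),
      ((∑ i, c i • v i) j' : ℝ) = ∑ i, (c i : ℝ) * w i j' := by
    intro c j'
    rw [Finset.sum_apply]
    push_cast
    refine Finset.sum_congr rfl fun i _ => ?_
    simp only [hw, Pi.smul_apply, smul_eq_mul]
    push_cast
    ring
  -- positivity of degrees
  have hgpos : ∀ i, 0 < ∑ j, a j * v i j := by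
    intro i
    have hwmem : w i ∈ coneFin w := by
      refine ⟨fun k => if k = i then 1 else 0, fun k => by by_cases h : k = i <;> simp [h], ?_⟩
      symm
      rw [Finset.sum_eq_single i (fun k _ hk => by simp [hk]) (by simp)]
      simp
    have hwne : w i ≠ 0 := hv.ne_zero i
    have h1 := hpos (w i) hwmem hwne
    have h2 : ((∑ j, a j * v i j : ℤ) : ℝ) = ∑ j, (a j : ℝ) * w i j := by
      push_cast
      refine Finset.sum_congr rfl fun j _ => ?_
      simp [hw]
    have h3 : (0:ℝ) < ((∑ j, a j * v i j : ℤ) : ℝ) := by rw [h2]; exact h1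
    exact_mod_cast h3
  set gd : Fin d → ℕ := fun i => (∑ j, a j * v i j).toNat with hgd
  have hgdpos : ∀ i, 0 < gd i := fun i => by
    have := hgpos i; simp only [hgd]; omega
  have hgdval : ∀ i, (gd i : ℤ) = ∑ j, a j * v i j := fun i => by
    have := hgpos i; simp only [hgd]; omega
  -- q values are the coordinates, and lie in [0,1)
  have hqval : ∀ x ∈ parPoints v,
      ⇑(B.repr (fun j => (x j : ℝ))) = q x ∧ ∀ i, 0 ≤ q x i ∧ q x i < 1 := by
    intro x hx
    obtain ⟨q', hq'bnd, hx'⟩ := hx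
    have e1 : ⇑(B.repr (fun j => (x j : ℝ))) = q x := by
      rw [hq x ⟨q', hq'bnd, hx'⟩]; exact hrepr _
    have e2 : ⇑(B.repr (fun j => (x j : ℝ))) = q' := by
      rw [hx']; exact hrepr _
    refine ⟨e1, fun i => ?_⟩
    have e3 : q x i = q' i := by rw [← congrFun e1 i, congrFun e2 i]
    rw [e3]; exact hq'bnd i
  -- the epsilon indicator
  set ex : (Fin d → ℤ) → Fin d → ℕ := fun x i => if i ∈ K ∧ q x i = 0 then 1 else 0 with hex
  have hεcast : ∀ (x : Fin d → ℤ) (j' : Fin d),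
      ((ε x) j' : ℝ) = ∑ i, ((ex x i : ℝ)) * w i j' := by
    intro x j'
    rw [hε x]
    have h1 : ((∑ i ∈ K.filter (fun i => q x i = 0), v i) j' : ℝ)
        = ∑ i ∈ K.filter (fun i => q x i = 0), (v i j' : ℝ) := by
      rw [Finset.sum_apply]; push_cast; rfl
    rw [h1]
    have hKf : K.filter (fun i => q x i = 0) = univ.filter (fun i => i ∈ K ∧ q x i = 0) := by
      ext i; simp
    rw [hKf, Finset.sum_filter]
    refine Finset.sum_congr rfl fun i _ => ?_
    simp only [hex]
    by_cases h : i ∈ K ∧ q x i = 0 <;> simp [h, hw]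
  -- the assembly map
  set φ : (Fin d → ℤ) → (Fin d → ℕ) → (Fin d → ℤ) :=
    fun x c => fun i => ε x i + x i + ∑ j, (c j : ℤ) * v j i with hφ
  have hφrepr : ∀ x ∈ parPoints v, ∀ c : Fin d → ℕ,
      ⇑(B.repr (fun j' => ((φ x c) j' : ℝ))) = fun j => q x j + (ex x j : ℝ) + (c j : ℝ) := by
    intro x hx c
    have hcast : (fun j' => ((φ x c) j' : ℝ))
        = ∑ j, (q x j + (ex x j : ℝ) + (c j : ℝ)) • w j := by
      funext j'
      rw [Finset.sum_apply]
      simp only [hφ, Pi.smul_apply, smul_eq_mul]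
      push_cast
      rw [hεcast x j']
      have h2 : (x j' : ℝ) = ∑ i, q x i * w i j' := by
        have h3 := congrFun (hq x hx) j'
        rw [h3, Finset.sum_apply]
        refine Finset.sum_congr rfl fun i _ => ?_
        simp [hw]
      rw [h2]
      have h4 : ∑ j, (c j : ℝ) * (v j j' : ℝ) = ∑ j, (c j : ℝ) * w j j' := by
        refine Finset.sum_congr rfl fun j _ => by simp [hw]
      rw [h4]
      rw [← Finset.sum_add_distrib, ← Finset.sum_add_distrib]
      refine Finset.sum_congr rfl fun i _ => by ring
    rw [hcast, hrepr]
  -- degree of the assembled point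
  have hdegφ : ∀ (x : Fin d → ℤ) (c : Fin d → ℕ),
      ∑ i, a i * (φ x c) i = (∑ i, a i * (ε x i + x i)) + ∑ j, (c j : ℤ) * gd j := by
    intro x c
    simp only [hφ]
    calc ∑ i, a i * (ε x i + x i + ∑ j, (c j:ℤ) * v j i)
        = ∑ i, (a i * (ε x i + x i) + ∑ j, a i * ((c j:ℤ) * v j i)) := by
          refine Finset.sum_congr rfl fun i _ => ?_
          rw [mul_add, Finset.mul_sum]
      _ = (∑ i, a i * (ε x i + x i)) + ∑ i, ∑ j, a i * ((c j:ℤ) * v j i) :=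
          Finset.sum_add_distrib
      _ = (∑ i, a i * (ε x i + x i)) + ∑ j, (c j : ℤ) * gd j := by
          rw [Finset.sum_comm]
          congr 1
          refine Finset.sum_congr rfl fun j _ => ?_
          rw [hgdval j, Finset.mul_sum]
          refine Finset.sum_congr rfl fun i _ => by ring
  -- degrees are nonnegative on the cone
  have hdegnn : ∀ z : Fin d → ℤ,
      (∀ j, 0 ≤ B.repr (fun j' => (z j' : ℝ)) j) → 0 ≤ ∑ i, a i * z i := by
    intro z hz
    by_cases h0 : (fun j' => ((z j' : ℝ))) = 0
    · have hz0 : ∀ i, z i = 0 := by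
        intro i
        have h5 := congrFun h0 i
        rw [Pi.zero_apply] at h5
        exact_mod_cast h5
      have hsum0 : ∑ i, a i * z i = 0 :=
        Finset.sum_eq_zero fun i _ => by rw [hz0 i, mul_zero]
      omega
    · have h1 := hpos _ ((hcone _).mpr hz) h0
      have h2 : ((∑ i, a i * z i : ℤ) : ℝ) = ∑ i, (a i : ℝ) * (z i : ℝ) := by
        push_cast; rfl
      have h3 : (0:ℝ) < ((∑ i, a i * z i : ℤ) : ℝ) := by rw [h2]; exact h1
      exact_mod_cast h3.le
  -- parPoints is finite
  have hparfin : (parPoints v).Finite := by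
    set N : ℤ := ∑ i, ∑ j', |v i j'| with hN
    apply Set.Finite.subset (Set.Finite.pi (fun j : Fin d => Set.finite_Icc (-N) N))
    rintro x ⟨q', hq'b, hx'⟩
    intro j _
    simp only [Set.mem_Icc]
    have hxj : (x j : ℝ) = ∑ i, q' i * w i j := by
      rw [congrFun hx' j, Finset.sum_apply]
      refine Finset.sum_congr rfl fun i _ => ?_
      simp [hw]
    have habs : |(x j : ℝ)| ≤ ∑ i, |(v i j : ℝ)| := by
      rw [hxj]
      refine (Finset.abs_sum_le_sum_abs _ _).trans (Finset.sum_le_sum fun i _ => ?_)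
      rw [abs_mul]
      have h0 := (hq'b i).1
      have h1 := (hq'b i).2
      have h2 : |q' i| ≤ 1 := by rw [abs_of_nonneg h0]; linarith
      have h3 : |w i j| = |(v i j : ℝ)| := by simp [hw]
      rw [h3]
      nlinarith [abs_nonneg ((v i j : ℝ))]
    have hNb : ∑ i, |(v i j : ℝ)| ≤ (N : ℝ) := by
      rw [hN]
      push_cast
      refine Finset.sum_le_sum fun i _ => ?_
      exact Finset.single_le_sum (f := fun j' => |(v i j' : ℝ)|)
        (fun j' _ => abs_nonneg _) (Finset.mem_univ j)
    have habs2 : |(x j : ℝ)| ≤ (N : ℝ) := habs.trans hNb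
    have habs3 : |x j| ≤ N := by exact_mod_cast (abs_le.mp habs2) |>.imp id id |> abs_le.mpr
    exact abs_le.mp habs3
  -- convolution of the two counting series
  have key1 := aux_conv (parPoints v) (Set.univ : Set (Fin d → ℕ))
    (fun x => ∑ i, a i * (ε x i + x i))
    (fun c => ∑ j, (c j : ℤ) * gd j)
    (fun k => Set.Finite.subset hparfin (fun x hx => hx.1))
    (fun k => by
      apply Set.Finite.subset (Set.Finite.pi (fun i : Fin d => Set.finite_Iic k))
      rintro c ⟨-, hsum⟩
      have hsum' : ∑ j, (c j : ℤ) * gd j = (k:ℤ) := hsum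
      clear hsum
      intro i _
      simp only [Set.mem_Iic]
      have h1 : ((c i : ℤ)) * gd i ≤ ∑ j, (c j : ℤ) * gd j := by
        apply Finset.single_le_sum (f := fun j => ((c j : ℤ)) * gd j) _ (Finset.mem_univ i)
        intro j _; positivity
      have hgi : (1:ℤ) ≤ gd i := by exact_mod_cast hgdpos i
      have h2 : (c i : ℤ) ≤ (c i : ℤ) * gd i := le_mul_of_one_le_right (by positivity) hgi
      have h4 : (c i : ℤ) ≤ (k:ℤ) := by omega
      exact_mod_cast h4)
    (fun x hx => by
      have h1 : ∀ j, 0 ≤ B.repr (fun j' => ((φ x (fun _ => 0)) j' : ℝ)) j := by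
        intro j
        simp only [hφrepr x hx (fun _ => 0)]
        have hq0 := ((hqval x hx).2 j).1
        have h2 : (0:ℝ) ≤ (ex x j : ℝ) := Nat.cast_nonneg _
        linarith
      have h2 := hdegnn _ h1
      rw [hdegφ] at h2
      simpa using h2)
    (fun c _ => by positivity)
  simp only [Set.mem_univ, true_and, and_true, Set.mem_setOf_eq] at key1
  -- the bijection between graded pieces of the semi-open cone and pairs
  have key2 : ∀ k : ℕ,
      ({z : Fin d → ℤ | (fun j => (z j : ℝ)) ∈ coneFin w \ S ∧
          ∑ i, a i * z i = (k : ℤ)}).ncard =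
      ({p : (Fin d → ℤ) × (Fin d → ℕ) | p.1 ∈ parPoints v ∧
          (∑ i, a i * (ε p.1 i + p.1 i)) + ∑ j, (p.2 j : ℤ) * gd j = (k:ℤ)}).ncard := by
    intro k
    have himg : (fun p : (Fin d → ℤ) × (Fin d → ℕ) => φ p.1 p.2) ''
        {p : (Fin d → ℤ) × (Fin d → ℕ) | p.1 ∈ parPoints v ∧
          (∑ i, a i * (ε p.1 i + p.1 i)) + ∑ j, (p.2 j : ℤ) * gd j = (k:ℤ)} =
        {z : Fin d → ℤ | (fun j => (z j : ℝ)) ∈ coneFin w \ S ∧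
          ∑ i, a i * z i = (k : ℤ)} := by
      ext z
      simp only [Set.mem_image, Set.mem_setOf_eq, Prod.exists, Set.mem_diff]
      constructor
      · rintro ⟨x, c, ⟨hx, hsum⟩, rfl⟩
        have hrep := hφrepr x hx c
        have hnn : ∀ j, 0 ≤ B.repr (fun j' => ((φ x c) j' : ℝ)) j := by
          intro j
          simp only [hrep]
          have hq0 := ((hqval x hx).2 j).1
          have h2 : (0:ℝ) ≤ (ex x j : ℝ) := Nat.cast_nonneg _
          have h3 : (0:ℝ) ≤ (c j : ℝ) := Nat.cast_nonneg _
          linarith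
        refine ⟨⟨(hcone _).mpr hnn, ?_⟩, ?_⟩
        · intro hmem
          obtain ⟨i, hiK, hri⟩ := (hSmem _ hnn).mp hmem
          rw [congrFun hrep i] at hri
          have hq0 := ((hqval x hx).2 i).1
          have h2 : (0:ℝ) ≤ (ex x i : ℝ) := Nat.cast_nonneg _
          have h3 : (0:ℝ) ≤ (c i : ℝ) := Nat.cast_nonneg _
          have hqz : q x i = 0 := by linarith
          have hexz : ex x i = 1 := by simp only [hex]; rw [if_pos ⟨hiK, hqz⟩]
          rw [hexz] at hri
          norm_num at hri
          linarith
        · rw [hdegφ]; exact hsum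
      · rintro ⟨⟨hzc, hzs⟩, hzdeg⟩
        set r : Fin d → ℝ := fun j => B.repr (fun j' => (z j' : ℝ)) j with hr
        have hr0 : ∀ j, 0 ≤ r j := (hcone _).mp hzc
        have hrK : ∀ i ∈ K, r i ≠ 0 := by
          intro i hiK h0
          exact hzs ((hSmem _ hr0).mpr ⟨i, hiK, h0⟩)
        set x : Fin d → ℤ := z - ∑ j, ⌊r j⌋ • v j with hxdef
        have hcastx : (fun j' => (x j' : ℝ)) = ∑ i, Int.fract (r i) • w i := by
          funext j'
          rw [Finset.sum_apply]
          have hz' : (z j' : ℝ) = ∑ i, r i * w i j' := by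
            have h5 := congrFun (hsumrepr (fun j'' => (z j'' : ℝ))).symm j'
            rw [Finset.sum_apply] at h5
            exact h5
          have hx' : (x j' : ℝ) = (z j' : ℝ) - ((∑ j, ⌊r j⌋ • v j) j' : ℝ) := by
            simp only [hxdef, Pi.sub_apply]
            push_cast
            ring
          rw [hx', hcastsum, hz', ← Finset.sum_sub_distrib]
          refine Finset.sum_congr rfl fun i _ => ?_
          rw [Pi.smul_apply, smul_eq_mul, ← Int.self_sub_floor]
          ring
        have hxpar : x ∈ parPoints v :=
          ⟨fun i => Int.fract (r i),
           fun i => ⟨Int.fract_nonneg _, Int.fract_lt_one _⟩, hcastx⟩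
        have hqx : ∀ i, q x i = Int.fract (r i) := by
          intro i
          have h6 := (hqval x hxpar).1
          rw [hcastx, hrepr] at h6
          exact (congrFun h6 i).symm
        have hfl : ∀ j, 0 ≤ ⌊r j⌋ := fun j => Int.floor_nonneg.mpr (hr0 j)
        have hcge : ∀ j, (ex x j : ℤ) ≤ ⌊r j⌋ := by
          intro j
          by_cases h : j ∈ K ∧ q x j = 0
          · have hx1 : ex x j = 1 := by simp only [hex]; rw [if_pos h]
            have hfr : Int.fract (r j) = 0 := by rw [← hqx j]; exact h.2
            have hrj : r j = (⌊r j⌋ : ℝ) := by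
              have h8 : r j - ⌊r j⌋ = 0 := by rw [Int.self_sub_floor, hfr]
              linarith
            have hflne : ⌊r j⌋ ≠ 0 := by
              intro hh
              refine hrK j h.1 ?_
              rw [hrj, hh]
              norm_num
            have := hfl j
            rw [hx1]
            omega
          · have hx0 : ex x j = 0 := by simp only [hex]; rw [if_neg h]
            rw [hx0]
            exact_mod_cast hfl j
        set c : Fin d → ℕ := fun j => (⌊r j⌋ - ex x j).toNat with hcdef
        have hcval : ∀ j, (c j : ℤ) = ⌊r j⌋ - ex x j := by
          intro j
          simp only [hcdef]
          have := hcge j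
          omega
        have hφz : φ x c = z := by
          have hrepeq : ⇑(B.repr (fun j' => ((φ x c) j' : ℝ)))
              = ⇑(B.repr (fun j' => (z j' : ℝ))) := by
            rw [hφrepr x hxpar c]
            funext j
            rw [hqx j]
            have h7 : (c j : ℝ) = (⌊r j⌋ : ℝ) - (ex x j : ℝ) := by
              exact_mod_cast congrArg (Int.cast : ℤ → ℝ) (hcval j)
            rw [h7]
            have h8 : Int.fract (r j) = r j - (⌊r j⌋ : ℝ) := (Int.self_sub_floor _).symm
            rw [h8]
            ring
          have hceq : (fun j' => ((φ x c) j' : ℝ)) = (fun j' => (z j' : ℝ)) :=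
            B.repr.injective (DFunLike.coe_injective hrepeq)
          funext j
          exact_mod_cast congrFun hceq j
        refine ⟨x, c, ⟨hxpar, ?_⟩, hφz⟩
        rw [← hdegφ x c, hφz]
        exact hzdeg
    rw [← himg, Set.ncard_image_of_injOn]
    rintro ⟨x, c⟩ ⟨hx, -⟩ ⟨x', c'⟩ ⟨hx', -⟩ h
    simp only at h hx hx'
    have hre : (fun j => q x j + (ex x j : ℝ) + (c j : ℝ))
        = (fun j => q x' j + (ex x' j : ℝ) + (c' j : ℝ)) := by
      rw [← hφrepr x hx c, ← hφrepr x' hx' c', h]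
    have hqeq : ∀ j, q x j = q x' j := by
      intro j
      have hj := congrFun hre j
      have e1 : Int.fract (q x j + ((ex x j + c j : ℕ) : ℝ)) = q x j := by
        rw [show ((ex x j + c j : ℕ):ℝ) = (((ex x j + c j : ℕ) : ℤ):ℝ) by push_cast; ring]
        rw [Int.fract_add_intCast]
        exact Int.fract_eq_self.mpr ⟨((hqval x hx).2 j).1, ((hqval x hx).2 j).2⟩
      have e2 : Int.fract (q x' j + ((ex x' j + c' j : ℕ) : ℝ)) = q x' j := by
        rw [show ((ex x' j + c' j : ℕ):ℝ) = (((ex x' j + c' j : ℕ) : ℤ):ℝ) by push_cast; ring]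
        rw [Int.fract_add_intCast]
        exact Int.fract_eq_self.mpr ⟨((hqval x' hx').2 j).1, ((hqval x' hx').2 j).2⟩
      have harg : q x j + ((ex x j + c j : ℕ) : ℝ) = q x' j + ((ex x' j + c' j : ℕ) : ℝ) := by
        push_cast
        linarith [hj]
      rw [← e1, harg, e2]
    have hxx : x = x' := by
      funext j
      have hcx : (fun j' => (x j' : ℝ)) = (fun j' => (x' j' : ℝ)) := by
        rw [hq x hx, hq x' hx']
        refine Finset.sum_congr rfl fun i _ => by rw [hqeq i]
      exact_mod_cast congrFun hcx j
    have hcc : c = c' := by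
      funext j
      have hj := congrFun hre j
      have hex_eq : (ex x j : ℝ) = (ex x' j : ℝ) := by rw [hxx]
      have h9 : (c j : ℝ) = (c' j : ℝ) := by
        rw [hqeq j, hex_eq] at hj
        linarith
      exact_mod_cast h9
    rw [Prod.mk.injEq]
    exact ⟨hxx, hcc⟩
  -- assemble everything
  have hC := aux_prod gd hgdpos (univ : Finset (Fin d))
  simp only [Finset.mem_univ, not_true, false_implies, implies_true, true_and] at hC
  have hNM : (PowerSeries.mk fun k =>
      (({z : Fin d → ℤ | (fun j => (z j : ℝ)) ∈ coneFin w \ S ∧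
          ∑ i, a i * z i = (k : ℤ)}).ncard : ℤ)) =
      (PowerSeries.mk fun k =>
        (({x ∈ parPoints v | ∑ i, a i * (ε x i + x i) = (k:ℤ)}).ncard : ℤ)) *
      (PowerSeries.mk fun k =>
        (({c : Fin d → ℕ | ∑ j, (c j : ℤ) * gd j = (k:ℤ)}).ncard : ℤ)) := by
    rw [key1]
    ext k
    rw [PowerSeries.coeff_mk, PowerSeries.coeff_mk]
    exact_mod_cast key2 k
  have hprod : (∏ i : Fin d, (1 - (PowerSeries.X : PowerSeries ℤ) ^ (∑ j, a j * v i j).toNat))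
      = ∏ i : Fin d, (1 - (PowerSeries.X : PowerSeries ℤ) ^ gd i) := by
    simp only [hgd]
  rw [hprod, hNM, mul_assoc, hC, mul_one]
end

section
/- Let σ ⊆ ℝ^d be a full-dimensional simplicial cone with integral generators v_1,...,v_d, S a union of facets of σ, x ∈ ℤ^d ∩ par(v_1,...,v_d) with x = Σ q_i v_i, and ε(x) the sum of all v_i with q_i = 0 whose opposite facet lies in S. Then (x + M_σ) \ S = ε(x) + x + M_σ, where M_σ is the monoid generated by v_1,...,v_d. -/
open Finset

open Classical in
/-- Membership characterization for the cone over `{w j : j ≠ i}` when the `w j`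
are independent. -/
lemma cone_mem_iff_aux {d : ℕ} (w : Fin d → E d)
    (hinj : Function.Injective w)
    (huniq : ∀ a b : Fin d → ℝ, ∑ i, a i • w i = ∑ i, b i • w i → a = b)
    (i : Fin d) (a : Fin d → ℝ) :
    (∑ j, a j • w j) ∈ coneOf (w '' {j | j ≠ i}) ↔ (a i = 0 ∧ ∀ j, 0 ≤ a j) := by
  constructor
  · rintro ⟨t, c, hts, hc, hy⟩
    set s : Finset (Fin d) := (univ.erase i).filter (fun j => w j ∈ t) with hs
    have himg : Finset.image w s = t := by
      ext y
      constructor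
      · intro hy'
        obtain ⟨j, hj, rfl⟩ := Finset.mem_image.mp hy'
        exact (Finset.mem_filter.mp hj).2
      · intro hy'
        obtain ⟨j, hj, rfl⟩ := hts hy'
        exact Finset.mem_image.mpr ⟨j, Finset.mem_filter.mpr
          ⟨Finset.mem_erase.mpr ⟨hj, Finset.mem_univ j⟩, hy'⟩, rfl⟩
    set b : Fin d → ℝ := fun j => if j ∈ s then c (w j) else 0 with hb
    have hab : a = b := by
      apply huniq
      rw [hy, ← himg, Finset.sum_image (fun x _ y _ h => hinj h)]
      rw [← Finset.sum_filter_of_ne (s := univ) (p := fun j => j ∈ s)]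
      · apply Finset.sum_congr
        · ext j; simp
        · intro j hj
          simp [hb, Finset.mem_filter.mp hj]
      · intro j _ h
        by_contra hjs
        simp [hb, hjs] at h
    constructor
    · rw [hab, hb]
      have : i ∉ s := by simp [hs]
      simp [this]
    · intro j
      rw [hab, hb]
      by_cases h : j ∈ s <;> simp [h, hc]
  · rintro ⟨hai, ha⟩
    refine ⟨Finset.image w (univ.erase i),
      fun y => if h : ∃ j, w j = y then a h.choose else 0, ?_, ?_, ?_⟩
    · intro y hy'
      obtain ⟨j, hj, rfl⟩ := Finset.mem_image.mp hy'
      exact ⟨j, Finset.mem_erase.mp hj |>.1, rfl⟩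
    · intro y
      by_cases h : ∃ j, w j = y
      · simp only [dif_pos h]; exact ha _
      · simp [h]
    · rw [Finset.sum_image (fun x _ y _ h => hinj h)]
      have key : ∀ j ∈ univ.erase i,
          (if h : ∃ k, w k = w j then a h.choose else 0) • w j = a j • w j := by
        intro j _
        have h : ∃ k, w k = w j := ⟨j, rfl⟩
        rw [dif_pos h]
        congr 1
        exact congrArg a (hinj h.choose_spec)
      rw [Finset.sum_congr rfl key]
      rw [← Finset.add_sum_erase _ _ (Finset.mem_univ i), hai, zero_smul, zero_add]

open Classical in
/-- Let `σ ⊆ ℝ^d` be a full-dimensional simplicial cone with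
integral generators `v_1,…,v_d`, `S` a union of facets of `σ` (those opposite
`v_i` for `i ∈ K`), `x ∈ ℤ^d ∩ par(v_1,…,v_d)` with `x = ∑ qᵢvᵢ`, and `ε(x)`
the sum of all `v_i` with `q_i = 0` whose opposite facet lies in `S`.
Then `(x + M_σ) \ S = ε(x) + x + M_σ`, where `M_σ` is the monoid generated by
`v_1,…,v_d`. -/
theorem semiopen_translate_identity {d : ℕ}
    (v : Fin d → (Fin d → ℤ))
    (hv : LinearIndependent ℝ (fun i => (fun j => (v i j : ℝ))))
    (K : Finset (Fin d))
    (S : Set (E d))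
    (hS : S = ⋃ i ∈ K, coneOf ((fun i => (fun j => (v i j : ℝ))) '' {j | j ≠ i}))
    (x : Fin d → ℤ) (hx : x ∈ parPoints v)
    (q : Fin d → ℝ)
    (hq : (fun j => (x j : ℝ)) = ∑ i, q i • (fun j => (v i j : ℝ)))
    (ε : Fin d → ℤ)
    (hε : ε = ∑ i ∈ K.filter (fun i => q i = 0), v i) :
    ∀ z : Fin d → ℤ,
      ((∃ m ∈ genMonoid v, z = x + m) ∧ (fun j => (z j : ℝ)) ∉ S) ↔
      (∃ m ∈ genMonoid v, z = ε + x + m) := by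
  classical
  set w : Fin d → E d := fun i => (fun j => (v i j : ℝ)) with hw
  have hinj : Function.Injective w := hv.injective
  have huniq : ∀ a b : Fin d → ℝ, ∑ i, a i • w i = ∑ i, b i • w i → a = b := by
    intro a b h
    have h0 : ∑ i, (a - b) i • w i = 0 := by
      simp only [Pi.sub_apply, sub_smul, Finset.sum_sub_distrib, h, sub_self]
    have hz := Fintype.linearIndependent_iff.mp hv (a - b) h0
    funext i
    have hi := hz i
    simp only [Pi.sub_apply] at hi
    linarith
  -- q is in [0,1)
  obtain ⟨q', hq'b, hxq'⟩ := hx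
  have hqq' : q = q' := huniq q q' (hq.symm.trans hxq')
  have hqb : ∀ i, 0 ≤ q i ∧ q i < 1 := hqq' ▸ hq'b
  -- cast lemma for monoid translates
  have hcast : ∀ c : Fin d → ℕ,
      (fun j => (((x + ∑ i, (c i : ℤ) • v i) j : ℤ) : ℝ)) = ∑ i, (q i + (c i : ℝ)) • w i := by
    intro c
    funext j
    have hxj : (x j : ℝ) = ∑ i, q i * (v i j : ℝ) := by
      have hqj := congrFun hq j
      simpa [Finset.sum_apply] using hqj
    simp [Finset.sum_apply, hxj, add_mul, Finset.sum_add_distrib, smul_eq_mul, hw]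
  -- ε as sum with indicator coefficients
  set ind : Fin d → ℕ := fun i => if i ∈ K ∧ q i = 0 then 1 else 0 with hind
  have hεind : ε = ∑ i, (ind i : ℤ) • v i := by
    rw [hε, show K.filter (fun i => q i = 0) = univ.filter (fun i => i ∈ K ∧ q i = 0) by
      ext i; simp]
    rw [Finset.sum_filter]
    apply Finset.sum_congr rfl
    intro i _
    by_cases h : i ∈ K ∧ q i = 0 <;> simp [hind, h]
  -- membership in S characterization
  have hSmem : ∀ a : Fin d → ℝ, (∀ i, 0 ≤ a i) →
      ((∑ j, a j • w j) ∈ S ↔ ∃ i ∈ K, a i = 0) := by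
    intro a ha
    rw [hS]
    simp only [Set.mem_iUnion]
    constructor
    · rintro ⟨i, hi, hmem⟩
      exact ⟨i, hi, ((cone_mem_iff_aux w hinj huniq i a).mp hmem).1⟩
    · rintro ⟨i, hi, hai⟩
      exact ⟨i, hi, (cone_mem_iff_aux w hinj huniq i a).mpr ⟨hai, ha⟩⟩
  intro z
  constructor
  · rintro ⟨⟨m, ⟨c, rfl⟩, rfl⟩, hzS⟩
    have hzr := hcast c
    have hpos : ∀ i, 0 ≤ q i + (c i : ℝ) := fun i => add_nonneg (hqb i).1 (Nat.cast_nonneg _)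
    have hne : ∀ i ∈ K, q i + (c i : ℝ) ≠ 0 := by
      intro i hi hzero
      apply hzS
      rw [hzr]
      exact (hSmem _ hpos).mpr ⟨i, hi, hzero⟩
    have hge1 : ∀ i, (i ∈ K ∧ q i = 0) → 1 ≤ c i := by
      intro i hi
      by_contra h
      have hc0 : c i = 0 := by omega
      exact hne i hi.1 (by simp [hi.2, hc0])
    refine ⟨∑ i, ((c i - ind i : ℕ) : ℤ) • v i, ⟨_, rfl⟩, ?_⟩
    have hsum : ε + ∑ i, ((c i - ind i : ℕ) : ℤ) • v i = ∑ i, (c i : ℤ) • v i := by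
      rw [hεind, ← Finset.sum_add_distrib]
      apply Finset.sum_congr rfl
      intro i _
      rw [← add_smul]
      congr 1
      have hle : ind i ≤ c i := by
        by_cases h : i ∈ K ∧ q i = 0
        · simp only [hind, if_pos h]; exact hge1 i h
        · simp [hind, h]
      push_cast [Nat.cast_sub hle]
      ring
    rw [← hsum]
    abel
  · rintro ⟨m, ⟨c, rfl⟩, rfl⟩
    have heq : ε + x + ∑ i, (c i : ℤ) • v i = x + ∑ i, ((ind i + c i : ℕ) : ℤ) • v i := by
      rw [hεind]
      push_cast [add_smul, Finset.sum_add_distrib]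
      abel
    constructor
    · exact ⟨∑ i, ((ind i + c i : ℕ) : ℤ) • v i, ⟨_, rfl⟩, heq⟩
    · intro hmem
      rw [heq, hcast (fun i => ind i + c i)] at hmem
      have hpos : ∀ i, 0 ≤ q i + ((ind i + c i : ℕ) : ℝ) :=
        fun i => add_nonneg (hqb i).1 (Nat.cast_nonneg _)
      obtain ⟨i, hi, h0⟩ := (hSmem _ hpos).mp hmem
      by_cases hqi : q i = 0
      · have hind1 : ind i = 1 := by simp [hind, hi, hqi]
        rw [hqi, hind1] at h0
        have : (0:ℝ) ≤ (c i : ℝ) := Nat.cast_nonneg _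
        push_cast at h0
        linarith
      · have hq0 : 0 < q i := lt_of_le_of_ne (hqb i).1 (Ne.symm hqi)
        have : (0:ℝ) ≤ ((ind i + c i : ℕ) : ℝ) := Nat.cast_nonneg _
        linarith
end

section
/- Let C = cone(x_1,...,x_n) ⊆ ℝ^d. Every face F of cone(x_1,...,x_{n−1}) that is visible from x_n satisfies: for the new cone cone(F, x_n), the apex ray structure holds, i.e., cone(F, x_n) ∩ cone(x_1,...,x_{n−1}) = F. In particular, distinct visible facets F, F′ of cone(x_1,...,x_{n−1}) give pyramids cone(F, x_n) and cone(F′, x_n) whose intersection is contained in cone(F ∩ F′, x_n). -/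
open Finset

/-- Let `C = cone(x_1,…,x_n) ⊆ ℝ^d` and
`D = cone(x_1,…,x_{n−1})`. Every face `F` of `D` visible from `x_n` satisfies
`cone(F, x_n) ∩ D = F`; in particular, distinct visible facets `F, F′` of `D`
give pyramids `cone(F, x_n)`, `cone(F′, x_n)` whose intersection is contained
in `cone(F ∩ F′, x_n)`. -/
theorem pyramid_apex_ray_structure {d n : ℕ} (x : Fin (n + 1) → E d)
    (D : Set (E d)) (hD : D = coneFin (fun i : Fin n => x i.castSucc)) :
    (∀ F, IsFace D F → VisibleFrom D (x (Fin.last n)) F →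
      addRay F (x (Fin.last n)) ∩ D = F) ∧
    (∀ F F', IsFace D F → setDim F = setDim D - 1 →
      IsFace D F' → setDim F' = setDim D - 1 →
      VisibleFrom D (x (Fin.last n)) F → VisibleFrom D (x (Fin.last n)) F' →
      F ≠ F' →
      addRay F (x (Fin.last n)) ∩ addRay F' (x (Fin.last n)) ⊆
        addRay (F ∩ F') (x (Fin.last n))) := by
  set X := x (Fin.last n) with hX
  have hFsub : ∀ F, IsFace D F → F ⊆ D := by
    intro F hF
    rcases hF with rfl | ⟨μ, _, rfl⟩
    · exact le_refl _
    · exact Set.inter_subset_left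
  have hsmul : ∀ z ∈ D, ∀ s : ℝ, 0 ≤ s → s • z ∈ D := by
    intro z hz s hs
    subst hD
    obtain ⟨c, hc, rfl⟩ := hz
    refine ⟨fun i => s * c i, fun i => mul_nonneg hs (hc i), ?_⟩
    rw [Finset.smul_sum]
    exact Finset.sum_congr rfl fun i _ => (mul_smul s (c i) _).symm
  have main : ∀ F, IsFace D F → VisibleFrom D X F → addRay F X ∩ D = F := by
    intro F hF hvis
    obtain ⟨hx, hseg⟩ := hvis
    apply Set.Subset.antisymm
    · rintro z ⟨⟨y, hy, t, ht, rfl⟩, hzD⟩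
      rcases eq_or_lt_of_le ht with rfl | ht'
      · simpa using hy
      · exfalso
        have h1 : (0:ℝ) < 1 + t := by linarith
        have hw : (1 / (1 + t)) • (y + t • X) ∈ D :=
          hsmul _ hzD _ (by positivity)
        have hwseg : (1 / (1 + t)) • (y + t • X) ∈ segment ℝ X y := by
          refine ⟨t / (1 + t), 1 / (1 + t), by positivity, by positivity, ?_, ?_⟩
          · field_simp; ring
          · rw [smul_add, smul_smul, add_comm]
            congr 2
            field_simp
        have heq := hseg y hy _ hwseg hw
        have heq2 : y + t • X = (1 + t) • y := by
          calc y + t • X = ((1 + t) * (1 / (1 + t))) • (y + t • X) := by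
                rw [mul_one_div, div_self h1.ne', one_smul]
            _ = (1 + t) • ((1 / (1 + t)) • (y + t • X)) := mul_smul _ _ _
            _ = (1 + t) • y := by rw [heq]
        have heq3 : t • X = t • y := by
          have : y + t • X = y + t • y := by
            rw [heq2, add_smul, one_smul]
          exact add_left_cancel this
        have hXy : X = y := smul_right_injective _ ht'.ne' heq3
        exact hx (hXy ▸ hFsub F hF hy)
    · intro y hy
      exact ⟨⟨y, hy, 0, le_refl _, by simp⟩, hFsub F hF hy⟩
  refine ⟨main, ?_⟩
  intro F F' hF _ hF' _ hvis hvis' _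
  rintro z ⟨⟨y, hy, t, ht, rfl⟩, ⟨y', hy', t', ht', heq⟩⟩
  rcases le_total t t' with h | h
  · have h2 : y = y' + (t' - t) • X := by
      have h3 := congrArg (fun w => w - t • X) heq
      simp only [add_sub_cancel_right] at h3
      rw [sub_smul, h3]
      abel
    have hyD : y ∈ D := hFsub F hF hy
    have hyF' : y ∈ F' := by
      rw [← main F' hF' hvis']
      exact ⟨⟨y', hy', t' - t, by linarith, h2⟩, hyD⟩
    exact ⟨y, ⟨hy, hyF'⟩, t, ht, rfl⟩
  · have h2 : y' = y + (t - t') • X := by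
      have h3 := congrArg (fun w => w - t' • X) heq.symm
      simp only [add_sub_cancel_right] at h3
      rw [sub_smul, h3]
      abel
    have hyD : y' ∈ D := hFsub F' hF' hy'
    have hyF : y' ∈ F := by
      rw [← main F hF hvis]
      exact ⟨⟨y, hy, t - t', by linarith, h2⟩, hyD⟩
    rw [heq]
    exact ⟨y', ⟨hyF, hy'⟩, t', ht', rfl⟩
end
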